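/- arXiv:2003.04652 — 9 statements merged into one kernel-verified Lean document; each statement's English description precedes it below -/
import Mathlib

section
/- Let L1 and L2 be finite-dimensional real Lie algebras, let K1 ⊆ L1 and K2 ⊆ L2 be Lie ideals with dim K1 = dim L1 − 1 and dim K2 = dim L2 − 1, and let y1 ∈ L1 ∖ K1 and y2 ∈ L2 ∖ K2. If there exist a Lie algebra isomorphism σ : K1 → K2, a scalar α ∈ ℝ ∖ {0}, and an element u ∈ K2 such that σ([y1, x]) = α·[y2, σ(x)] + [u, σ(x)] for all x ∈ K1, then L1 and L2 are isomorphic as Lie algebras. -/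
/-- If `K₁ ⊆ L₁`, `K₂ ⊆ L₂` are codimension-one Lie ideals, `y₁ ∈ L₁ ∖ K₁`, `y₂ ∈ L₂ ∖ K₂`,
and there are a Lie algebra isomorphism `σ : K₁ → K₂`, a nonzero scalar `α` and `u ∈ K₂`
with `σ ⁅y₁, x⁆ = α • ⁅y₂, σ x⁆ + ⁅u, σ x⁆` for all `x ∈ K₁`, then `L₁ ≅ L₂`. -/
theorem stmt1 (L₁ : Type) [LieRing L₁] [LieAlgebra ℝ L₁] [FiniteDimensional ℝ L₁]
    (L₂ : Type) [LieRing L₂] [LieAlgebra ℝ L₂] [FiniteDimensional ℝ L₂]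
    (K₁ : LieIdeal ℝ L₁) (K₂ : LieIdeal ℝ L₂)
    (hK₁ : Module.finrank ℝ L₁ = Module.finrank ℝ ↥K₁ + 1)
    (hK₂ : Module.finrank ℝ L₂ = Module.finrank ℝ ↥K₂ + 1)
    (y₁ : L₁) (hy₁ : y₁ ∉ K₁) (y₂ : L₂) (hy₂ : y₂ ∉ K₂)
    (σ : ↥K₁ ≃ₗ⁅ℝ⁆ ↥K₂) (α : ℝ) (hα : α ≠ 0) (u : ↥K₂)
    (hcomp : ∀ x : ↥K₁,
      ((σ ⟨⁅y₁, (x : L₁)⁆, K₁.lie_mem x.2⟩ : ↥K₂) : L₂)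
        = α • ⁅y₂, ((σ x : ↥K₂) : L₂)⁆ + ⁅((u : L₂)), ((σ x : ↥K₂) : L₂)⁆) :
    Nonempty (L₁ ≃ₗ⁅ℝ⁆ L₂) := by
  classical
  have hy₁0 : y₁ ≠ 0 := fun h => hy₁ (h ▸ K₁.zero_mem)
  -- complement
  have hdisj : Disjoint (K₁ : Submodule ℝ L₁) (ℝ ∙ y₁) := by
    rw [Submodule.disjoint_span_singleton]
    exact fun h => absurd h hy₁
  have htop : (K₁ : Submodule ℝ L₁) ⊔ (ℝ ∙ y₁) = ⊤ := by
    apply Submodule.eq_top_of_finrank_eq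
    have h1 := Submodule.finrank_sup_add_finrank_inf_eq (K₁ : Submodule ℝ L₁) (ℝ ∙ y₁)
    rw [hdisj.eq_bot] at h1
    simp only [finrank_bot, add_zero] at h1
    rw [h1, finrank_span_singleton hy₁0, hK₁]
    rfl
  have hc : IsCompl (K₁ : Submodule ℝ L₁) (ℝ ∙ y₁) := ⟨hdisj, codisjoint_iff.mpr htop⟩
  set π : L₁ →ₗ[ℝ] ↥K₁ := (K₁ : Submodule ℝ L₁).linearProjOfIsCompl _ hc with hπ
  set c : L₁ →ₗ[ℝ] ℝ :=
    (LinearEquiv.coord ℝ L₁ y₁ hy₁0).toLinearMap ∘ₗ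
      (ℝ ∙ y₁).linearProjOfIsCompl _ hc.symm with hcdef
  have hsum : ∀ z : L₁, ((π z : L₁)) + c z • y₁ = z := by
    intro z
    have h2 : c z • y₁ = (((ℝ ∙ y₁).linearProjOfIsCompl _ hc.symm z : L₁)) := by
      simpa [hcdef] using LinearEquiv.coord_apply_smul ℝ L₁ y₁ hy₁0
        ((ℝ ∙ y₁).linearProjOfIsCompl _ hc.symm z)
    rw [h2]
    exact Submodule.projection_add_projection_eq_self hc z
  have hπk : ∀ m : ↥K₁, π (m : L₁) = m := fun m =>
    Submodule.linearProjOfIsCompl_apply_left hc m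
  have hck : ∀ m : ↥K₁, c (m : L₁) = 0 := by
    intro m
    have : (ℝ ∙ y₁).linearProjOfIsCompl _ hc.symm (m : L₁) = 0 :=
      Submodule.linearProjOfIsCompl_apply_right' hc.symm m.2
    simp [hcdef]; exact this
  have hπy : π y₁ = 0 :=
    Submodule.linearProjOfIsCompl_apply_right' hc (Submodule.mem_span_singleton_self y₁)
  have hcy : c y₁ = 1 := by
    have h1 : (ℝ ∙ y₁).linearProjOfIsCompl _ hc.symm y₁
        = ⟨y₁, Submodule.mem_span_singleton_self y₁⟩ :=
      Submodule.linearProjOfIsCompl_apply_left hc.symm ⟨y₁, Submodule.mem_span_singleton_self y₁⟩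
    rw [hcdef, LinearMap.comp_apply, LinearEquiv.coe_coe, h1]
    exact LinearEquiv.coord_self ℝ L₁ y₁ hy₁0
  set w : L₂ := α • y₂ + (u : L₂) with hw
  set flin : L₁ →ₗ[ℝ] L₂ :=
    (K₂ : Submodule ℝ L₂).subtype ∘ₗ (σ.toLinearEquiv : ↥K₁ →ₗ[ℝ] ↥K₂) ∘ₗ π
      + (LinearMap.toSpanSingleton ℝ L₂ w) ∘ₗ c with hflin
  have happ : ∀ z : L₁, flin z = ((σ (π z) : ↥K₂) : L₂) + c z • w := by
    intro z; simp [hflin, LinearMap.toSpanSingleton_apply]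
  have fk : ∀ m : ↥K₁, flin (m : L₁) = ((σ m : ↥K₂) : L₂) := by
    intro m; rw [happ, hπk, hck]; simp
  have fy : flin y₁ = w := by
    rw [happ, hπy, hcy]
    have h0 : σ 0 = 0 := by
      have := congrArg (Subtype.val) (σ.toLinearEquiv.map_zero)
      exact Subtype.ext (by simpa using this)
    rw [h0]; simp
  have key : ∀ m : ↥K₁, flin ⁅y₁, (m : L₁)⁆ = ⁅w, ((σ m : ↥K₂) : L₂)⁆ := by
    intro m
    have h1 : ⁅y₁, (m : L₁)⁆ = ((⟨⁅y₁, (m : L₁)⁆, K₁.lie_mem m.2⟩ : ↥K₁) : L₁) := rfl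
    rw [h1, fk, hcomp, hw]
    rw [add_lie, smul_lie]
  have keyK : ∀ m n : ↥K₁, flin ⁅(m : L₁), (n : L₁)⁆ = ⁅((σ m : ↥K₂) : L₂), ((σ n : ↥K₂) : L₂)⁆ := by
    intro m n
    have h1 : ⁅(m : L₁), (n : L₁)⁆ = ((⁅m, n⁆ : ↥K₁) : L₁) := rfl
    rw [h1, fk, LieEquiv.map_lie]
    rfl
  have hmaplie : ∀ a b : L₁, flin ⁅a, b⁆ = ⁅flin a, flin b⁆ := by
    intro a b
    have ha := (hsum a).symm
    have hb := (hsum b).symm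
    rw [ha, hb]
    simp only [lie_add, add_lie, lie_smul, smul_lie, lie_self, smul_zero, add_zero,
      map_add, map_smul]
    have h3 : flin ⁅((π a : L₁)), y₁⁆ = -⁅w, ((σ (π a) : ↥K₂) : L₂)⁆ := by
      rw [← lie_skew, map_neg, key]
    have h4 : ⁅((σ (π a) : ↥K₂) : L₂), w⁆ = -⁅w, ((σ (π a) : ↥K₂) : L₂)⁆ := (lie_skew _ _).symm
    simp only [keyK, key, fk, fy, h3, h4]
  have hwK : w ∉ K₂ := by
    intro h
    apply hy₂
    have h1 : α • y₂ ∈ (K₂ : Submodule ℝ L₂) := by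
      have := Submodule.sub_mem (K₂ : Submodule ℝ L₂) h u.2
      simpa [hw] using this
    have h2 : (α⁻¹ * α) • y₂ ∈ (K₂ : Submodule ℝ L₂) := by
      rw [mul_smul]; exact Submodule.smul_mem _ _ h1
    rwa [inv_mul_cancel₀ hα, one_smul] at h2
  have hinj : Function.Injective flin := by
    rw [← LinearMap.ker_eq_bot]
    rw [Submodule.eq_bot_iff]
    intro z hz
    rw [LinearMap.mem_ker, happ] at hz
    have ht : c z = 0 := by
      by_contra h
      apply hwK
      have h1 : c z • w = -((σ (π z) : ↥K₂) : L₂) := by linear_combination (norm := module) hz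
      have h2 : w = (c z)⁻¹ • -((σ (π z) : ↥K₂) : L₂) := by
        rw [← h1, smul_smul, inv_mul_cancel₀ h, one_smul]
      rw [h2]
      exact Submodule.smul_mem _ _ (Submodule.neg_mem _ (σ (π z)).2)
    rw [ht, zero_smul, add_zero] at hz
    have h3 : σ (π z) = 0 := Subtype.ext hz
    have h4 : π z = 0 := by
      have h5 := congrArg σ.symm h3
      rw [σ.symm_apply_apply] at h5
      rw [h5]
      exact Subtype.ext (by simpa using congrArg Subtype.val σ.symm.toLinearEquiv.map_zero)
    rw [← hsum z, h4, ht, zero_smul, add_zero, ZeroMemClass.coe_zero]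
  have hrank : Module.finrank ℝ L₁ = Module.finrank ℝ L₂ := by
    rw [hK₁, hK₂, σ.toLinearEquiv.finrank_eq]
  have hsurj : Function.Surjective flin :=
    (LinearMap.injective_iff_surjective_of_finrank_eq_finrank hrank).mp hinj
  exact ⟨LieEquiv.ofBijective { flin with map_lie' := hmaplie _ _ } ⟨hinj, hsurj⟩⟩
end

section
/- Let L be a finite-dimensional real Lie algebra, K ⊆ L a Lie ideal with dim K = dim L − 1, and y ∈ L ∖ K. Then [L,L] = (ad y)(K) + [K,K] as subspaces of L, and the following are equivalent: (i) [L,L] = K; (ii) K = (ad y)(K) + [K,K]; (iii) the linear endomorphism of the quotient space K/[K,K] induced by the restriction of ad y to K (which is well defined since ad y maps [K,K] into [K,K]) is bijective. -/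
/-- For a codimension-one Lie ideal `K` of `L` and `y ∈ L ∖ K`:
`[L,L] = (ad y)(K) + [K,K]`, and the following are equivalent: (i) `[L,L] = K`;
(ii) `K = (ad y)(K) + [K,K]`; (iii) the endomorphism of `K/[K,K]` induced by the
restriction `f` of `ad y` to `K` is bijective. -/
theorem stmt3 (L : Type) [LieRing L] [LieAlgebra ℝ L] [FiniteDimensional ℝ L]
    (K : LieIdeal ℝ L)
    (hK : Module.finrank ℝ L = Module.finrank ℝ ↥K + 1)
    (y : L) (hy : y ∉ K)
    (f : ↥K →ₗ[ℝ] ↥K) (hf : ∀ x : ↥K, (f x : L) = ⁅y, (x : L)⁆)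
    (D : Submodule ℝ ↥K)
    (hD : D = LieSubmodule.toSubmodule (LieAlgebra.derivedSeries ℝ ↥K 1))
    (hmap : D ≤ D.comap f) :
    LieSubmodule.toSubmodule (LieAlgebra.derivedSeries ℝ L 1)
        = Submodule.map (LieAlgebra.ad ℝ L y) K.toSubmodule
            ⊔ LieSubmodule.toSubmodule (⁅K, K⁆ : LieIdeal ℝ L)
      ∧ List.TFAE
          [ LieAlgebra.derivedSeries ℝ L 1 = K,
            K.toSubmodule = Submodule.map (LieAlgebra.ad ℝ L y) K.toSubmodule
              ⊔ LieSubmodule.toSubmodule (⁅K, K⁆ : LieIdeal ℝ L),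
            Function.Bijective (Submodule.mapQ D D f hmap) ] := by
  -- K ⊔ span{y} = ⊤
  have hKlt : K.toSubmodule < K.toSubmodule ⊔ Submodule.span ℝ {y} := by
    refine lt_of_le_of_ne le_sup_left (fun h => hy ?_)
    have : y ∈ K.toSubmodule ⊔ Submodule.span ℝ {y} :=
      Submodule.mem_sup_right (Submodule.mem_span_singleton_self y)
    rwa [← h] at this
  have htop : K.toSubmodule ⊔ Submodule.span ℝ {y} = ⊤ := by
    apply Submodule.eq_top_of_finrank_eq
    have h1 : Module.finrank ℝ ↥K < Module.finrank ℝ ↥(K.toSubmodule ⊔ Submodule.span ℝ {y}) :=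
      Submodule.finrank_lt_finrank_of_lt hKlt
    have h2 : Module.finrank ℝ ↥(K.toSubmodule ⊔ Submodule.span ℝ {y}) ≤ Module.finrank ℝ L :=
      Submodule.finrank_le _
    omega
  have hdecomp : ∀ a : L, ∃ k ∈ K, ∃ c : ℝ, a = k + c • y := by
    intro a
    have ha : a ∈ K.toSubmodule ⊔ Submodule.span ℝ {y} := htop ▸ Submodule.mem_top
    obtain ⟨k, hk, z, hz, rfl⟩ := Submodule.mem_sup.mp ha
    obtain ⟨c, rfl⟩ := Submodule.mem_span_singleton.mp hz
    exact ⟨k, hk, c, rfl⟩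
  -- part 1
  have part1 : LieSubmodule.toSubmodule (LieAlgebra.derivedSeries ℝ L 1)
      = Submodule.map (LieAlgebra.ad ℝ L y) K.toSubmodule
          ⊔ LieSubmodule.toSubmodule (⁅K, K⁆ : LieIdeal ℝ L) := by
    apply le_antisymm
    · rw [LieAlgebra.derivedSeries_def, LieAlgebra.derivedSeriesOfIdeal_succ,
        LieAlgebra.derivedSeriesOfIdeal_zero, LieSubmodule.lieIdeal_oper_eq_linear_span]
      rw [Submodule.span_le]
      rintro _ ⟨⟨a, -⟩, ⟨b, -⟩, rfl⟩
      obtain ⟨k₁, hk₁, c₁, rfl⟩ := hdecomp a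
      obtain ⟨k₂, hk₂, c₂, rfl⟩ := hdecomp b
      have : ⁅k₁ + c₁ • y, k₂ + c₂ • y⁆
          = ⁅k₁, k₂⁆ + (c₁ • ⁅y, k₂⁆ + c₂ • ⁅k₁, y⁆) := by
        simp only [add_lie, lie_add, lie_smul, smul_lie, lie_self, smul_zero, smul_smul]
        abel
      rw [SetLike.mem_coe, this]
      refine Submodule.add_mem _ (Submodule.mem_sup_right (LieSubmodule.lie_mem_lie hk₁ hk₂))
        (Submodule.add_mem _ ?_ ?_)
      · exact Submodule.mem_sup_left (Submodule.smul_mem _ _ ⟨_, hk₂, rfl⟩)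
      · refine Submodule.mem_sup_left (Submodule.smul_mem _ _ ?_)
        rw [← lie_skew]
        exact neg_mem ⟨_, hk₁, rfl⟩
    · refine sup_le ?_ ?_
      · rintro _ ⟨k, hk, rfl⟩
        rw [LieAlgebra.derivedSeries_def, LieAlgebra.derivedSeriesOfIdeal_succ,
          LieAlgebra.derivedSeriesOfIdeal_zero]
        exact LieSubmodule.lie_mem_lie trivial trivial
      · intro x hx
        rw [LieAlgebra.derivedSeries_def, LieAlgebra.derivedSeriesOfIdeal_succ,
          LieAlgebra.derivedSeriesOfIdeal_zero]
        exact LieSubmodule.mono_lie le_top le_top hx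
  refine ⟨part1, ?_⟩
  -- relate D to ⁅K,K⁆
  have hDmap : Submodule.map K.toSubmodule.subtype D
      = LieSubmodule.toSubmodule (⁅K, K⁆ : LieIdeal ℝ L) := by
    rw [hD, LieIdeal.derivedSeries_eq_derivedSeriesOfIdeal_comap,
      LieIdeal.comap_toSubmodule]
    have : (K.incl : ↥K →ₗ[ℝ] L) = K.toSubmodule.subtype := rfl
    rw [this, Submodule.map_comap_subtype, LieAlgebra.derivedSeriesOfIdeal_succ,
      LieAlgebra.derivedSeriesOfIdeal_zero,
      inf_eq_right.mpr ((LieSubmodule.toSubmodule_le_toSubmodule _ _).mpr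
        (LieSubmodule.lie_le_left K K))]
  -- map subtype (range f) = map (ad y) K
  have hcomp : K.toSubmodule.subtype ∘ₗ f = (LieAlgebra.ad ℝ L y) ∘ₗ K.toSubmodule.subtype := by
    ext x; exact hf x
  have hrange : Submodule.map K.toSubmodule.subtype (LinearMap.range f)
      = Submodule.map (LieAlgebra.ad ℝ L y) K.toSubmodule := by
    rw [← LinearMap.range_comp, hcomp, LinearMap.range_comp, Submodule.range_subtype]
  have hinj := Submodule.map_injective_of_injective K.toSubmodule.injective_subtype
  have key : D ⊔ LinearMap.range f = ⊤ ↔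
      K.toSubmodule = Submodule.map (LieAlgebra.ad ℝ L y) K.toSubmodule
        ⊔ LieSubmodule.toSubmodule (⁅K, K⁆ : LieIdeal ℝ L) := by
    rw [← hinj.eq_iff, Submodule.map_sup, hDmap, hrange, Submodule.map_subtype_top,
      sup_comm]
    exact eq_comm
  have hrangeQ : LinearMap.range (Submodule.mapQ D D f hmap)
      = Submodule.map D.mkQ (LinearMap.range f) := by
    rw [← LinearMap.range_comp_of_range_eq_top _ (Submodule.range_mkQ D),
      Submodule.mapQ_mkQ, LinearMap.range_comp]
  tfae_have 1 ↔ 2 := by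
    rw [← LieSubmodule.toSubmodule_inj, part1, eq_comm]
  tfae_have 2 ↔ 3 := by
    rw [show Function.Bijective (Submodule.mapQ D D f hmap)
          ↔ Function.Surjective (Submodule.mapQ D D f hmap) from
        ⟨And.right, fun h => ⟨LinearMap.injective_iff_surjective.mpr h, h⟩⟩,
      ← LinearMap.range_eq_top, hrangeQ, Submodule.map_mkQ_eq_top, key]
  tfae_finish
end

section
/- Let n ≥ 1 and let L be a solvable real Lie algebra with dim L = n + 1 and dim [L,L] = n. Then L is indecomposable, i.e. L is not isomorphic to a direct product of two nonzero Lie algebras. -/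
/-- Componentwise Lie bracket on a binary product. -/
instance prodBracket {L₁ L₂ : Type*} [LieRing L₁] [LieRing L₂] :
    Bracket (L₁ × L₂) (L₁ × L₂) :=
  ⟨fun x y => (⁅x.1, y.1⁆, ⁅x.2, y.2⁆)⟩

/-- The direct product of two Lie rings. -/
instance prodLieRing {L₁ L₂ : Type*} [LieRing L₁] [LieRing L₂] : LieRing (L₁ × L₂) where
  add_lie x y z := Prod.ext (add_lie x.1 y.1 z.1) (add_lie x.2 y.2 z.2)
  lie_add x y z := Prod.ext (lie_add x.1 y.1 z.1) (lie_add x.2 y.2 z.2)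
  lie_self x := Prod.ext (lie_self x.1) (lie_self x.2)
  leibniz_lie x y z := Prod.ext (leibniz_lie x.1 y.1 z.1) (leibniz_lie x.2 y.2 z.2)

/-- The direct product of two Lie algebras. -/
instance prodLieAlgebra {R : Type*} [CommRing R] {L₁ L₂ : Type*} [LieRing L₁] [LieRing L₂]
    [LieAlgebra R L₁] [LieAlgebra R L₂] : LieAlgebra R (L₁ × L₂) where
  lie_smul t x y := Prod.ext (lie_smul t x.1 y.1) (lie_smul t x.2 y.2)

/-- A real Lie algebra is decomposable if it is isomorphic to the direct product of two
nonzero Lie algebras, and indecomposable otherwise. -/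
def Decomposable (L : Type) [LieRing L] [LieAlgebra ℝ L] : Prop :=
  ∃ (L₁ L₂ : Type) (_ : LieRing L₁) (_ : LieAlgebra ℝ L₁) (_ : LieRing L₂) (_ : LieAlgebra ℝ L₂),
    Nontrivial L₁ ∧ Nontrivial L₂ ∧ Nonempty (L ≃ₗ⁅ℝ⁆ (L₁ × L₂))

section Aux

variable {R : Type*} [CommRing R] {L₁ L₂ : Type*} [LieRing L₁] [LieRing L₂]
  [LieAlgebra R L₁] [LieAlgebra R L₂]

/-- Projection onto the first factor as a Lie algebra morphism. -/
def lieFst : (L₁ × L₂) →ₗ⁅R⁆ L₁ :=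
  { LinearMap.fst R L₁ L₂ with map_lie' := fun {_ _} => rfl }

/-- Projection onto the second factor as a Lie algebra morphism. -/
def lieSnd : (L₁ × L₂) →ₗ⁅R⁆ L₂ :=
  { LinearMap.snd R L₁ L₂ with map_lie' := fun {_ _} => rfl }

/-- The product of two Lie ideals as a Lie ideal of the product. -/
def prodLieIdeal (I : LieIdeal R L₁) (J : LieIdeal R L₂) : LieIdeal R (L₁ × L₂) where
  __ := (I : Submodule R L₁).prod (J : Submodule R L₂)
  lie_mem := fun {x m} hm => ⟨I.lie_mem hm.1, J.lie_mem hm.2⟩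

theorem mem_prodLieIdeal {I : LieIdeal R L₁} {J : LieIdeal R L₂} {x : L₁ × L₂} :
    x ∈ prodLieIdeal I J ↔ x.1 ∈ I ∧ x.2 ∈ J := Iff.rfl

/-- A product of submodules is linearly equivalent to the product of the submodules. -/
def submoduleProdEquiv {M₁ M₂ : Type*} [AddCommGroup M₁] [AddCommGroup M₂]
    [Module R M₁] [Module R M₂] (p : Submodule R M₁) (q : Submodule R M₂) :
    (p.prod q) ≃ₗ[R] p × q where
  toFun x := (⟨x.1.1, x.2.1⟩, ⟨x.1.2, x.2.2⟩)
  invFun x := ⟨(x.1.1, x.2.1), ⟨x.1.2, x.2.2⟩⟩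
  map_add' _ _ := rfl
  map_smul' _ _ := rfl
  left_inv _ := rfl
  right_inv _ := rfl

lemma finrank_lieIdeal_coe {R L : Type*} [CommRing R] [LieRing L] [LieAlgebra R L]
    (I : LieIdeal R L) :
    Module.finrank R ↥I = Module.finrank R ↥(LieSubmodule.toSubmodule I) := rfl

end Aux

/-- A solvable real Lie algebra of dimension `n + 1` (`n ≥ 1`) whose derived algebra has
dimension `n` is indecomposable. -/
theorem stmt4 (n : ℕ) (hn : 1 ≤ n) (L : Type) [LieRing L] [LieAlgebra ℝ L]
    [FiniteDimensional ℝ L] [LieAlgebra.IsSolvable L]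
    (hdim : Module.finrank ℝ L = n + 1)
    (hder : Module.finrank ℝ ↥(LieAlgebra.derivedSeries ℝ L 1) = n) :
    ¬ Decomposable L := by
  rintro ⟨L₁, L₂, _, _, _, _, h₁, h₂, ⟨e⟩⟩
  -- finite dimensionality
  haveI : FiniteDimensional ℝ (L₁ × L₂) := Module.Finite.equiv e.toLinearEquiv
  haveI : FiniteDimensional ℝ L₁ :=
    Module.Finite.of_surjective (LinearMap.fst ℝ L₁ L₂) Prod.fst_surjective
  haveI : FiniteDimensional ℝ L₂ :=
    Module.Finite.of_surjective (LinearMap.snd ℝ L₁ L₂) Prod.snd_surjective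
  -- solvability
  haveI : LieAlgebra.IsSolvable (L₁ × L₂) :=
    e.symm.injective.lieAlgebra_isSolvable
  haveI : LieAlgebra.IsSolvable L₁ :=
    (Prod.fst_surjective (α := L₁) (β := L₂)).lieAlgebra_isSolvable (f := lieFst (R := ℝ))
  haveI : LieAlgebra.IsSolvable L₂ :=
    (Prod.snd_surjective (α := L₁) (β := L₂)).lieAlgebra_isSolvable (f := lieSnd (R := ℝ))
  -- derived algebras are proper
  have hlt₁ : Module.finrank ℝ ↥(LieAlgebra.derivedSeries ℝ L₁ 1) < Module.finrank ℝ L₁ := by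
    apply Submodule.finrank_lt
    have h := LieAlgebra.derivedSeries_lt_top_of_solvable (R := ℝ) (L := L₁)
    rw [lt_top_iff_ne_top] at h
    intro hc
    exact h (by rwa [← LieSubmodule.toSubmodule_inj, LieSubmodule.top_toSubmodule])
  have hlt₂ : Module.finrank ℝ ↥(LieAlgebra.derivedSeries ℝ L₂ 1) < Module.finrank ℝ L₂ := by
    apply Submodule.finrank_lt
    have h := LieAlgebra.derivedSeries_lt_top_of_solvable (R := ℝ) (L := L₂)
    rw [lt_top_iff_ne_top] at h
    intro hc
    exact h (by rwa [← LieSubmodule.toSubmodule_inj, LieSubmodule.top_toSubmodule])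
  -- the derived series of the product has finrank n
  have hmap : (LieAlgebra.derivedSeries ℝ L 1).map e.toLieHom
      = LieAlgebra.derivedSeries ℝ (L₁ × L₂) 1 :=
    LieIdeal.derivedSeries_map_eq 1 e.surjective
  have hrankP : Module.finrank ℝ ↥(LieAlgebra.derivedSeries ℝ (L₁ × L₂) 1) = n := by
    rw [← hmap, finrank_lieIdeal_coe, LieIdeal.coe_map_of_surjective e.surjective,
      show ((e.toLieHom : L →ₗ[ℝ] L₁ × L₂)) = (e.toLinearEquiv : L →ₗ[ℝ] L₁ × L₂) from rfl,
      LinearEquiv.finrank_map_eq]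
    exact hder
  -- the derived series of the product is contained in the product of derived series
  have hle : LieAlgebra.derivedSeries ℝ (L₁ × L₂) 1
      ≤ prodLieIdeal (LieAlgebra.derivedSeries ℝ L₁ 1) (LieAlgebra.derivedSeries ℝ L₂ 1) := by
    show ⁅(⊤ : LieIdeal ℝ (L₁ × L₂)), (⊤ : LieIdeal ℝ (L₁ × L₂))⁆ ≤ _
    rw [LieSubmodule.lieIdeal_oper_eq_span, LieSubmodule.lieSpan_le]
    rintro z ⟨x, y, rfl⟩
    exact ⟨LieSubmodule.lie_mem_lie trivial trivial, LieSubmodule.lie_mem_lie trivial trivial⟩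
  have hsum : n ≤ Module.finrank ℝ ↥(LieAlgebra.derivedSeries ℝ L₁ 1)
      + Module.finrank ℝ ↥(LieAlgebra.derivedSeries ℝ L₂ 1) := by
    calc n = Module.finrank ℝ ↥(LieAlgebra.derivedSeries ℝ (L₁ × L₂) 1) := hrankP.symm
      _ ≤ Module.finrank ℝ ↥((LieAlgebra.derivedSeries ℝ L₁ 1 : Submodule ℝ L₁).prod
            (LieAlgebra.derivedSeries ℝ L₂ 1 : Submodule ℝ L₂)) :=
          Submodule.finrank_mono hle
      _ = _ := by rw [(submoduleProdEquiv _ _).finrank_eq, Module.finrank_prod]; rfl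
  -- dimensions add up
  have hdims : Module.finrank ℝ L₁ + Module.finrank ℝ L₂ = n + 1 := by
    rw [← Module.finrank_prod, ← e.toLinearEquiv.finrank_eq, hdim]
  omega
end

section
/- Let L1 and L2 be finite-dimensional solvable real Lie algebras such that, for i = 1, 2, the derived algebra Ki := [Li, Li] satisfies dim Ki = dim Li − 1, and fix yi ∈ Li ∖ Ki. Then L1 and L2 are isomorphic as Lie algebras if and only if there exist a Lie algebra isomorphism σ : K1 → K2, a scalar α ∈ ℝ ∖ {0}, and an element u ∈ K2 such that σ([y1, x]) = α·[y2, σ(x)] + [u, σ(x)] for all x ∈ K1. -/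
open Module

lemma codim_one_decomp {L : Type} [LieRing L] [LieAlgebra ℝ L] [FiniteDimensional ℝ L]
    (K : LieIdeal ℝ L) (h : finrank ℝ L = finrank ℝ ↥K + 1)
    (y : L) (hy : y ∉ K) (z : L) : ∃ (t : ℝ) (k : ↥K), z = t • y + ↑k := by
  have hinf : K.toSubmodule ⊓ (Submodule.span ℝ {y}) = ⊥ := by
    rw [Submodule.eq_bot_iff]
    intro x hx
    rw [Submodule.mem_inf] at hx
    obtain ⟨hx1, hx2⟩ := hx
    rw [Submodule.mem_span_singleton] at hx2
    obtain ⟨t, rfl⟩ := hx2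
    rcases eq_or_ne t 0 with rfl | ht
    · simp
    · have : t⁻¹ • t • y ∈ K.toSubmodule := K.toSubmodule.smul_mem t⁻¹ hx1
      rw [smul_smul, inv_mul_cancel₀ ht, one_smul] at this
      exact absurd this hy
  have hsup : K.toSubmodule ⊔ (Submodule.span ℝ {y}) = ⊤ := by
    apply Submodule.eq_top_of_finrank_eq
    have := Submodule.finrank_sup_add_finrank_inf_eq K.toSubmodule (Submodule.span ℝ {y})
    rw [hinf] at this
    have hy0 : y ≠ 0 := fun h0 => hy (h0 ▸ K.zero_mem)
    rw [finrank_span_singleton hy0] at this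
    simp only [finrank_bot, add_zero] at this
    have hr : finrank ℝ ↥K.toSubmodule = finrank ℝ ↥K := rfl
    omega
  have hz : z ∈ K.toSubmodule ⊔ (Submodule.span ℝ {y}) := hsup ▸ Submodule.mem_top
  rw [Submodule.mem_sup] at hz
  obtain ⟨k, hk, s, hs, rfl⟩ := hz
  rw [Submodule.mem_span_singleton] at hs
  obtain ⟨t, rfl⟩ := hs
  exact ⟨t, ⟨k, hk⟩, by rw [add_comm]⟩

noncomputable section

def fmap {L : Type} [LieRing L] [LieAlgebra ℝ L] (K : LieIdeal ℝ L) (y : L) :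
    (↥K × ℝ) →ₗ[ℝ] L where
  toFun p := ↑p.1 + p.2 • y
  map_add' a b := by simp [add_smul]; abel
  map_smul' t a := by simp [smul_smul]

lemma fmap_bij {L : Type} [LieRing L] [LieAlgebra ℝ L] [FiniteDimensional ℝ L]
    (K : LieIdeal ℝ L) (h : finrank ℝ L = finrank ℝ ↥K + 1)
    (y : L) (hy : y ∉ K) : Function.Bijective (fmap K y) := by
  constructor
  · rw [← LinearMap.ker_eq_bot, Submodule.eq_bot_iff]
    rintro ⟨k, t⟩ hkt
    have hkt' : (k : L) + t • y = 0 := hkt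
    have ht : t = 0 := by
      by_contra ht
      have : y = t⁻¹ • (-(k : L)) := by
        rw [eq_inv_smul_iff₀ ht, eq_neg_iff_add_eq_zero, add_comm]
        exact hkt'
      exact hy (this ▸ K.smul_mem t⁻¹ (K.neg_mem k.2))
    have hk : (k : L) = 0 := by rw [ht, zero_smul, add_zero] at hkt'; exact hkt'
    simp [Prod.ext_iff, ht, Subtype.ext_iff, hk]
  · intro z
    obtain ⟨t, k, hz⟩ := codim_one_decomp K h y hy z
    exact ⟨(k, t), by simp [fmap, hz]; abel⟩



/-- Let `L₁, L₂` be finite-dimensional solvable real Lie algebras whose derived algebras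
`K₁, K₂` have codimension one, and fix `y₁ ∈ L₁ ∖ K₁`, `y₂ ∈ L₂ ∖ K₂`. Then `L₁ ≅ L₂`
iff there are a Lie algebra isomorphism `σ : K₁ → K₂`, a nonzero scalar `α` and `u ∈ K₂`
with `σ ⁅y₁, x⁆ = α • ⁅y₂, σ x⁆ + ⁅u, σ x⁆` for all `x ∈ K₁`. -/
theorem stmt6 (L₁ : Type) [LieRing L₁] [LieAlgebra ℝ L₁] [FiniteDimensional ℝ L₁]
    [LieAlgebra.IsSolvable L₁]
    (L₂ : Type) [LieRing L₂] [LieAlgebra ℝ L₂] [FiniteDimensional ℝ L₂]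
    [LieAlgebra.IsSolvable L₂]
    (K₁ : LieIdeal ℝ L₁) (hK₁def : K₁ = LieAlgebra.derivedSeries ℝ L₁ 1)
    (K₂ : LieIdeal ℝ L₂) (hK₂def : K₂ = LieAlgebra.derivedSeries ℝ L₂ 1)
    (hK₁ : Module.finrank ℝ L₁ = Module.finrank ℝ ↥K₁ + 1)
    (hK₂ : Module.finrank ℝ L₂ = Module.finrank ℝ ↥K₂ + 1)
    (y₁ : L₁) (hy₁ : y₁ ∉ K₁) (y₂ : L₂) (hy₂ : y₂ ∉ K₂) :
    Nonempty (L₁ ≃ₗ⁅ℝ⁆ L₂) ↔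
      ∃ (σ : ↥K₁ ≃ₗ⁅ℝ⁆ ↥K₂) (α : ℝ) (u : ↥K₂), α ≠ 0 ∧
        ∀ x : ↥K₁,
          ((σ ⟨⁅y₁, (x : L₁)⁆, K₁.lie_mem x.2⟩ : ↥K₂) : L₂)
            = α • ⁅y₂, ((σ x : ↥K₂) : L₂)⁆ + ⁅((u : L₂)), ((σ x : ↥K₂) : L₂)⁆ := by
  constructor
  · rintro ⟨φ⟩
    have hmap : LieIdeal.map φ.toLieHom K₁ = K₂ := by
      rw [hK₁def, hK₂def]
      exact LieIdeal.derivedSeries_map_eq 1 φ.surjective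
    have h1 : ∀ x : L₁, x ∈ K₁ → φ x ∈ K₂ := fun x hx => hmap ▸ LieIdeal.mem_map hx
    have h2 : ∀ x : L₂, x ∈ K₂ → φ.symm x ∈ K₁ := by
      have hmap' : LieIdeal.map φ.symm.toLieHom K₂ = K₁ := by
        rw [hK₁def, hK₂def]
        exact LieIdeal.derivedSeries_map_eq 1 φ.symm.surjective
      exact fun x hx => hmap' ▸ LieIdeal.mem_map hx
    let σ : ↥K₁ ≃ₗ⁅ℝ⁆ ↥K₂ :=
      { toFun := fun x => ⟨φ x, h1 x x.2⟩
        map_add' := fun a b => by ext; exact φ.toLieHom.map_add _ _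
        map_smul' := fun t a => by ext; exact φ.toLieHom.map_smul _ _
        map_lie' := by
          intro a b
          ext
          show φ ((⁅a, b⁆ : ↥K₁) : L₁) = ⁅φ ↑a, φ ↑b⁆
          erw [LieSubalgebra.coe_bracket (K₁ : LieSubalgebra ℝ L₁) a b]
          exact φ.map_lie _ _
        invFun := fun x => ⟨φ.symm x, h2 x x.2⟩
        left_inv := fun a => by ext; simp
        right_inv := fun a => by ext; simp }
    obtain ⟨t, v, hv⟩ := codim_one_decomp K₂ hK₂ y₂ hy₂ (φ y₁)
    have ht : t ≠ 0 := by
      rintro rfl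
      rw [zero_smul, zero_add] at hv
      have : φ.symm (φ y₁) ∈ K₁ := h2 _ (hv ▸ v.2)
      rw [φ.symm_apply_apply] at this
      exact hy₁ this
    refine ⟨σ, t, v, ht, fun x => ?_⟩
    have : ((σ ⟨⁅y₁, (x : L₁)⁆, K₁.lie_mem x.2⟩ : ↥K₂) : L₂) = φ ⁅y₁, (x : L₁)⁆ := rfl
    rw [this, LieEquiv.map_lie, hv]
    have hx : ((σ x : ↥K₂) : L₂) = φ x := rfl
    rw [hx]
    simp [add_lie, smul_lie]
  · rintro ⟨σ, α, u, hα, hσ⟩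
    set w : L₂ := α • y₂ + ↑u with hw
    have hwK : w ∉ K₂ := by
      intro hwmem
      have : α • y₂ ∈ K₂ := by
        have := K₂.sub_mem hwmem u.2
        simpa [hw] using this
      have : (α⁻¹ * α) • y₂ ∈ K₂ := by
        rw [mul_smul]; exact K₂.smul_mem _ this
      rw [inv_mul_cancel₀ hα, one_smul] at this
      exact hy₂ this
    have hb₁ := fmap_bij K₁ hK₁ y₁ hy₁
    have hb₂ := fmap_bij K₂ hK₂ w hwK
    let E₁ : (↥K₁ × ℝ) ≃ₗ[ℝ] L₁ := LinearEquiv.ofBijective _ hb₁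
    let E₂ : (↥K₂ × ℝ) ≃ₗ[ℝ] L₂ := LinearEquiv.ofBijective _ hb₂
    let mid : (↥K₁ × ℝ) ≃ₗ[ℝ] (↥K₂ × ℝ) := σ.toLinearEquiv.prodCongr (LinearEquiv.refl ℝ ℝ)
    let e : L₁ ≃ₗ[ℝ] L₂ := E₁.symm.trans (mid.trans E₂)
    have he : ∀ p : ↥K₁ × ℝ, e (fmap K₁ y₁ p) = ↑(σ p.1) + p.2 • w := by
      intro p
      show E₂ (mid (E₁.symm (fmap K₁ y₁ p))) = _
      have : E₁.symm (fmap K₁ y₁ p) = p := by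
        rw [LinearEquiv.symm_apply_eq]; rfl
      rw [this]
      rfl
    have hlie : ∀ a b : L₁, e ⁅a, b⁆ = ⁅e a, e b⁆ := by
      intro a b
      obtain ⟨p, rfl⟩ := hb₁.2 a
      obtain ⟨q, rfl⟩ := hb₁.2 b
      have hbr : ⁅fmap K₁ y₁ p, fmap K₁ y₁ q⁆
          = fmap K₁ y₁ (⁅p.1, q.1⁆ + p.2 • ⟨⁅y₁, (q.1 : L₁)⁆, K₁.lie_mem q.1.2⟩
              - q.2 • ⟨⁅y₁, (p.1 : L₁)⁆, K₁.lie_mem p.1.2⟩, 0) := by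
        show ⁅(p.1 : L₁) + p.2 • y₁, (q.1 : L₁) + q.2 • y₁⁆
          = ((⁅p.1, q.1⁆ + p.2 • (⟨⁅y₁, (q.1 : L₁)⁆, K₁.lie_mem q.1.2⟩ : ↥K₁)
              - q.2 • ⟨⁅y₁, (p.1 : L₁)⁆, K₁.lie_mem p.1.2⟩ : ↥K₁) : L₁) + (0:ℝ) • y₁
        push_cast
        erw [LieSubalgebra.coe_bracket (K₁ : LieSubalgebra ℝ L₁)]
        simp only [lie_add, add_lie, lie_smul, smul_lie, lie_self, smul_zero, smul_smul, zero_smul,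
          add_zero]
        rw [← lie_skew y₁ (p.1 : L₁)]
        module
      rw [hbr, he, he, he]
      rw [← LieEquiv.coe_toLinearEquiv σ]
      simp only [map_add, map_sub, map_smul]
      rw [LieEquiv.coe_toLinearEquiv σ]
      rw [LieEquiv.map_lie]
      push_cast
      erw [LieSubalgebra.coe_bracket (K₂ : LieSubalgebra ℝ L₂)]
      rw [hσ p.1, hσ q.1]
      have hww : ∀ z : L₂, ⁅w, z⁆ = α • ⁅y₂, z⁆ + ⁅(u : L₂), z⁆ := by
        intro z; rw [hw, add_lie, smul_lie]
      simp only [lie_add, add_lie, lie_smul, smul_lie, lie_self, smul_zero, add_zero, zero_smul,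
        smul_add]
      rw [← lie_skew ((σ p.1 : ↥K₂) : L₂) w, hww, hww]
      module
    exact ⟨{ e with map_lie' := hlie _ _ }⟩
end
end

section
/- Let L be a finite-dimensional real Lie algebra, H ⊆ L a nonzero solvable Lie ideal with dim H = dim L − 2, and z, y ∈ L such that L = ℝz ⊕ ℝy ⊕ H as an internal direct sum of vector subspaces and [z, y] ∈ H. Set K := ℝy ⊕ H. If there exist u ∈ K with [z, w] = [u, w] for all w ∈ K and v ∈ H with [y, x] = [v, x] for all x ∈ H, then [L,L] ≠ H. -/
/-- Let `H` be a nonzero solvable codimension-two Lie ideal of `L` and `z, y ∈ L` with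
`L = ℝz ⊕ ℝy ⊕ H` (internal direct sum of subspaces) and `⁅z, y⁆ ∈ H`; set `K := ℝy ⊕ H`.
If there are `u ∈ K` with `⁅z, w⁆ = ⁅u, w⁆` for all `w ∈ K` and `v ∈ H` with
`⁅y, x⁆ = ⁅v, x⁆` for all `x ∈ H`, then `[L,L] ≠ H`. -/
theorem stmt8 (L : Type) [LieRing L] [LieAlgebra ℝ L] [FiniteDimensional ℝ L]
    (H : LieIdeal ℝ L) (hHne : H ≠ ⊥) [LieAlgebra.IsSolvable ↥H]
    (hHdim : Module.finrank ℝ L = Module.finrank ℝ ↥H + 2)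
    (z y : L)
    (hsup : Submodule.span ℝ {z} ⊔ Submodule.span ℝ {y} ⊔ H.toSubmodule = ⊤)
    (hzind : Submodule.span ℝ {z} ⊓ (Submodule.span ℝ {y} ⊔ H.toSubmodule) = ⊥)
    (hyind : Submodule.span ℝ {y} ⊓ H.toSubmodule = ⊥)
    (hzy : ⁅z, y⁆ ∈ H)
    (u : L) (hu : u ∈ Submodule.span ℝ {y} ⊔ H.toSubmodule)
    (huw : ∀ w ∈ Submodule.span ℝ {y} ⊔ H.toSubmodule, ⁅z, w⁆ = ⁅u, w⁆)
    (v : L) (hv : v ∈ H) (hvx : ∀ x ∈ H, ⁅y, x⁆ = ⁅v, x⁆) :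
    LieAlgebra.derivedSeries ℝ L 1 ≠ H := by
  intro heq
  set J : LieIdeal ℝ L := ⁅H, H⁆ with hJ
  -- basic bracket memberships
  have hHH : ∀ {p q : L}, p ∈ H → q ∈ H → ⁅p, q⁆ ∈ J := fun hp hq =>
    LieSubmodule.lie_mem_lie hp hq
  have hyH : ∀ {x : L}, x ∈ H → ⁅y, x⁆ ∈ J := fun {x} hx => by
    rw [hvx x hx]; exact hHH hv hx
  obtain ⟨p, hp, h₀, hh₀, hu'⟩ := Submodule.mem_sup.mp hu
  obtain ⟨c, rfl⟩ := Submodule.mem_span_singleton.mp hp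
  have hzH : ∀ {x : L}, x ∈ H → ⁅z, x⁆ ∈ J := fun {x} hx => by
    rw [huw x (Submodule.mem_sup_right hx), ← hu', add_lie, smul_lie]
    exact J.add_mem (J.smul_mem c (hyH hx)) (hHH hh₀ hx)
  have hzyJ : ⁅z, y⁆ ∈ J := by
    rw [huw y (Submodule.mem_sup_left (Submodule.mem_span_singleton_self y)), ← hu',
      add_lie, smul_lie, lie_self, smul_zero, zero_add, ← lie_skew]
    exact J.neg_mem (hyH hh₀)
  -- decomposition of arbitrary elements
  have hdec : ∀ a : L, ∃ s t : ℝ, ∃ h ∈ H, a = s • z + t • y + h := by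
    intro a
    have ha : a ∈ Submodule.span ℝ {z} ⊔ Submodule.span ℝ {y} ⊔ H.toSubmodule := by
      rw [hsup]; trivial
    obtain ⟨b, hb, h, hh, rfl⟩ := Submodule.mem_sup.mp ha
    obtain ⟨bz, hbz, by', hby, rfl⟩ := Submodule.mem_sup.mp hb
    obtain ⟨s, rfl⟩ := Submodule.mem_span_singleton.mp hbz
    obtain ⟨t, rfl⟩ := Submodule.mem_span_singleton.mp hby
    exact ⟨s, t, h, hh, rfl⟩
  -- brackets with z, y, H land in J
  have hzA : ∀ b : L, ⁅z, b⁆ ∈ J := by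
    intro b
    obtain ⟨s, t, h, hh, rfl⟩ := hdec b
    simp only [lie_add, lie_smul, lie_self, smul_zero]
    exact J.add_mem (J.add_mem (J.zero_mem) (J.smul_mem t hzyJ)) (hzH hh)
  have hyA : ∀ b : L, ⁅y, b⁆ ∈ J := by
    intro b
    obtain ⟨s, t, h, hh, rfl⟩ := hdec b
    simp only [lie_add, lie_smul, lie_self, smul_zero]
    refine J.add_mem (J.add_mem ?_ (J.zero_mem)) (hyH hh)
    rw [← lie_skew]
    exact J.smul_mem s (J.neg_mem hzyJ)
  have hHA : ∀ {h : L}, h ∈ H → ∀ b : L, ⁅h, b⁆ ∈ J := by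
    intro h hh b
    obtain ⟨s, t, h', hh', rfl⟩ := hdec b
    simp only [lie_add, lie_smul]
    refine J.add_mem (J.add_mem ?_ ?_) (hHH hh hh')
    · rw [← lie_skew]; exact J.smul_mem s (J.neg_mem (hzH hh))
    · rw [← lie_skew]; exact J.smul_mem t (J.neg_mem (hyH hh))
  have key : ∀ a b : L, ⁅a, b⁆ ∈ J := by
    intro a b
    obtain ⟨s, t, h, hh, rfl⟩ := hdec a
    simp only [add_lie, smul_lie]
    exact J.add_mem (J.add_mem (J.smul_mem s (hzA b)) (J.smul_mem t (hyA b))) (hHA hh b)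
  -- derived series of L is contained in J
  have h1 : LieAlgebra.derivedSeries ℝ L 1 ≤ J := by
    rw [LieAlgebra.derivedSeries_def, LieAlgebra.derivedSeriesOfIdeal_succ,
      LieAlgebra.derivedSeriesOfIdeal_zero, LieSubmodule.lieIdeal_oper_eq_span]
    refine (LieSubmodule.lieSpan_le).mpr ?_
    rintro _ ⟨a, b, rfl⟩
    exact key a b
  have hHJ : (⁅H, H⁆ : LieIdeal ℝ L) = H := by
    exact le_antisymm (LieSubmodule.lie_le_right H H) (le_trans (le_of_eq heq.symm) h1)
  have hall : ∀ k, LieAlgebra.derivedSeriesOfIdeal ℝ L k H = H := by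
    intro k
    induction k with
    | zero => simp
    | succ k ih => rw [LieAlgebra.derivedSeriesOfIdeal_succ, ih, hHJ]
  obtain ⟨n, hn⟩ := LieAlgebra.IsSolvable.solvable (R := ℝ) (L := ↥H)
  have : LieAlgebra.derivedSeriesOfIdeal ℝ L n H = ⊥ :=
    (LieIdeal.derivedSeries_eq_bot_iff H n).mp hn
  rw [hall n] at this
  exact hHne this
end

section
/- Let n ≥ 1 and let L1, L2 be real Lie algebras such that, for i = 1, 2, the derived algebra Hi := [Li, Li] is abelian of dimension n, there are elements zi, yi ∈ Li with Li = ℝzi ⊕ ℝyi ⊕ Hi as vector spaces, [zi, yi] = 0, and the restrictions to Hi of ad zi and ad yi are linearly independent endomorphisms of Hi. Then L1 and L2 are isomorphic as Lie algebras if and only if there exist a linear isomorphism σ : H1 → H2 and scalars α, β, γ, δ ∈ ℝ with αδ − βγ ≠ 0 such that σ([z1, x]) = γ·[z2, σ(x)] + α·[y2, σ(x)] and σ([y1, x]) = δ·[z2, σ(x)] + β·[y2, σ(x)] for all x ∈ H1. -/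
open Submodule

private lemma aux_uniq {L : Type} [AddCommGroup L] [Module ℝ L]
    (H : Submodule ℝ L) {z y : L} (hz0 : z ≠ 0) (hy0 : y ≠ 0)
    (hzind : span ℝ {z} ⊓ (span ℝ {y} ⊔ H) = ⊥)
    (hyind : span ℝ {y} ⊓ H = ⊥)
    {s t : ℝ} {h : L} (hh : h ∈ H) (heq : s • z + t • y + h = 0) :
    s = 0 ∧ t = 0 ∧ h = 0 := by
  have h1 : s • z = -(t • y + h) := by
    have : s • z + (t • y + h) = 0 := by rw [← add_assoc]; exact heq
    exact eq_neg_of_add_eq_zero_left this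
  have hmem : s • z ∈ span ℝ {z} ⊓ (span ℝ {y} ⊔ H) := by
    refine ⟨smul_mem _ _ (mem_span_singleton_self z), ?_⟩
    rw [h1]
    exact neg_mem (add_mem (mem_sup_left (smul_mem _ _ (mem_span_singleton_self y)))
      (mem_sup_right hh))
  rw [hzind] at hmem
  have hsz : s • z = 0 := hmem
  have hs : s = 0 := by
    rcases smul_eq_zero.mp hsz with hs | hz; · exact hs
    · exact absurd hz hz0
  have h2 : t • y + h = 0 := by
    have := heq; rw [hsz, zero_add] at this; exact this
  have h3 : t • y = -h := eq_neg_of_add_eq_zero_left h2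
  have hmem2 : t • y ∈ span ℝ {y} ⊓ H := by
    refine ⟨smul_mem _ _ (mem_span_singleton_self y), ?_⟩
    rw [h3]; exact neg_mem hh
  rw [hyind] at hmem2
  have hty : t • y = 0 := hmem2
  have ht : t = 0 := by
    rcases smul_eq_zero.mp hty with ht | hy; · exact ht
    · exact absurd hy hy0
  refine ⟨hs, ht, ?_⟩
  have := h2; rw [hty, zero_add] at this; exact this

private lemma aux_decomp {L : Type} [AddCommGroup L] [Module ℝ L]
    (H : Submodule ℝ L) {z y : L} (hz0 : z ≠ 0) (hy0 : y ≠ 0)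
    (hsup : span ℝ {z} ⊔ span ℝ {y} ⊔ H = ⊤)
    (hzind : span ℝ {z} ⊓ (span ℝ {y} ⊔ H) = ⊥)
    (hyind : span ℝ {y} ⊓ H = ⊥) :
    ∃ (a b : L →ₗ[ℝ] ℝ) (p : L →ₗ[ℝ] H),
      (∀ v, a v • z + b v • y + (p v : L) = v) ∧
      a z = 1 ∧ b z = 0 ∧ p z = 0 ∧
      a y = 0 ∧ b y = 1 ∧ p y = 0 ∧
      (∀ h (hh : h ∈ H), a h = 0 ∧ b h = 0 ∧ (p h : L) = h) := by
  have c1 : IsCompl (span ℝ {z}) (span ℝ {y} ⊔ H) := by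
    constructor
    · exact disjoint_iff.mpr hzind
    · exact codisjoint_iff.mpr (by rw [← sup_assoc]; exact hsup)
  have c2 : IsCompl (span ℝ {y}) (span ℝ {z} ⊔ H) := by
    constructor
    · rw [disjoint_iff, eq_bot_iff]
      rintro v ⟨hv1, hv2⟩
      obtain ⟨w, hw, h, hh, hwh⟩ := mem_sup.mp hv2
      have hwmem : w ∈ span ℝ {z} ⊓ (span ℝ {y} ⊔ H) := by
        refine ⟨hw, ?_⟩
        have : w = v - h := by rw [← hwh]; abel
        rw [this]
        exact sub_mem (mem_sup_left hv1) (mem_sup_right hh)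
      rw [hzind] at hwmem
      have hw0 : w = 0 := hwmem
      have : v = h := by rw [← hwh, hw0, zero_add]
      rw [← hyind]
      exact ⟨hv1, this ▸ hh⟩
    · rw [codisjoint_iff, ← hsup]
      rw [sup_comm (span ℝ {z}) (span ℝ {y}), sup_assoc]
  have c3 : IsCompl H (span ℝ {z} ⊔ span ℝ {y}) := by
    constructor
    · rw [disjoint_iff, eq_bot_iff]
      rintro v ⟨hvH, hv2⟩
      obtain ⟨w, hw, w', hw', hww'⟩ := mem_sup.mp hv2
      have hwmem : w ∈ span ℝ {z} ⊓ (span ℝ {y} ⊔ H) := by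
        refine ⟨hw, ?_⟩
        have : w = v - w' := by rw [← hww']; abel
        rw [this]
        exact sub_mem (mem_sup_right hvH) (mem_sup_left hw')
      rw [hzind] at hwmem
      have hw0 : w = 0 := hwmem
      have hvw' : v = w' := by rw [← hww', hw0, zero_add]
      have : v ∈ span ℝ {y} ⊓ H := ⟨hvw' ▸ hw', hvH⟩
      rw [hyind] at this
      exact this
    · rw [codisjoint_iff, ← hsup]
      rw [sup_comm H _, sup_assoc]
  set Pz := (span ℝ {z}).projectionOnto _ c1 with hPz
  set Py := (span ℝ {y}).projectionOnto _ c2 with hPy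
  set pH := H.projectionOnto _ c3 with hpH
  set a := (LinearEquiv.coord ℝ L z hz0).toLinearMap ∘ₗ Pz with ha
  set b := (LinearEquiv.coord ℝ L y hy0).toLinearMap ∘ₗ Py with hb
  have hid : ∀ v, a v • z + b v • y + (pH v : L) = v := by
    intro v
    have hcz : a v • z = (Pz v : L) := LinearEquiv.coord_apply_smul ℝ L z hz0 (Pz v)
    have hcy : b v • y = (Py v : L) := LinearEquiv.coord_apply_smul ℝ L y hy0 (Py v)
    rw [hcz, hcy]
    have hv : v ∈ span ℝ {z} ⊔ span ℝ {y} ⊔ H := hsup ▸ mem_top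
    obtain ⟨v₁, hv₁, h, hh, rfl⟩ := mem_sup.mp hv
    obtain ⟨w₁, hw₁, w₂, hw₂, rfl⟩ := mem_sup.mp hv₁
    have e1 : (Pz (w₁ + w₂ + h) : L) = w₁ := by
      rw [map_add, map_add,
        projectionOnto_apply_of_mem_left c1 hw₁,
        projectionOnto_apply_of_mem_right c1 (mem_sup_left hw₂),
        projectionOnto_apply_of_mem_right c1 (mem_sup_right hh)]
      simp
    have e2 : (Py (w₁ + w₂ + h) : L) = w₂ := by
      rw [map_add, map_add,
        projectionOnto_apply_of_mem_right c2 (mem_sup_left hw₁),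
        projectionOnto_apply_of_mem_left c2 hw₂,
        projectionOnto_apply_of_mem_right c2 (mem_sup_right hh)]
      simp
    have e3 : (pH (w₁ + w₂ + h) : L) = h := by
      rw [map_add, map_add,
        projectionOnto_apply_of_mem_right c3 (mem_sup_left hw₁),
        projectionOnto_apply_of_mem_right c3 (mem_sup_right hw₂),
        projectionOnto_apply_of_mem_left c3 hh]
      simp
    rw [e1, e2, e3]
  have valz : a z = 1 ∧ b z = 0 ∧ pH z = 0 := by
    have h0 : (a z - 1) • z + b z • y + (pH z : L) = 0 := by
      rw [sub_smul, one_smul]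
      have h1 : a z • z - z + b z • y + (pH z : L)
          = (a z • z + b z • y + (pH z : L)) - z := by abel
      rw [h1, hid z, sub_self]
    obtain ⟨hs, ht, hp⟩ := aux_uniq H hz0 hy0 hzind hyind (pH z).2 h0
    exact ⟨by linarith, ht, ZeroMemClass.coe_eq_zero.mp hp⟩
  have valy : a y = 0 ∧ b y = 1 ∧ pH y = 0 := by
    have h0 : a y • z + (b y - 1) • y + (pH y : L) = 0 := by
      rw [sub_smul, one_smul]
      have h1 : a y • z + (b y • y - y) + (pH y : L)
          = (a y • z + b y • y + (pH y : L)) - y := by abel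
      rw [h1, hid y, sub_self]
    obtain ⟨hs, ht, hp⟩ := aux_uniq H hz0 hy0 hzind hyind (pH y).2 h0
    exact ⟨hs, by linarith, ZeroMemClass.coe_eq_zero.mp hp⟩
  have valh : ∀ h (hh : h ∈ H), a h = 0 ∧ b h = 0 ∧ (pH h : L) = h := by
    intro h hh
    have h0 : a h • z + b h • y + ((pH h : L) - h) = 0 := by
      have h1 : a h • z + b h • y + ((pH h : L) - h)
          = (a h • z + b h • y + (pH h : L)) - h := by abel
      rw [h1, hid h, sub_self]
    obtain ⟨hs, ht, hp⟩ := aux_uniq H hz0 hy0 hzind hyind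
      (sub_mem (pH h).2 hh) h0
    exact ⟨hs, ht, sub_eq_zero.mp hp⟩
  exact ⟨a, b, pH, hid, valz.1, valz.2.1, valz.2.2, valy.1, valy.2.1, valy.2.2, valh⟩

private lemma aux_lie_abelian {L : Type} [LieRing L] [LieAlgebra ℝ L] (H : LieIdeal ℝ L)
    (hab : IsLieAbelian ↥H) (x y : L) (hx : x ∈ H) (hy : y ∈ H) : ⁅x, y⁆ = 0 := by
  have h1 : (⁅x, y⁆ : L) = ↑(⁅(⟨x, hx⟩ : ↥H), (⟨y, hy⟩ : ↥H)⁆ : ↥H) := rfl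
  rw [h1, trivial_lie_zero]
  rfl

set_option maxHeartbeats 1000000 in
/-- Let `L₁, L₂` be real Lie algebras whose derived algebras `Hᵢ := [Lᵢ, Lᵢ]` are abelian
of dimension `n ≥ 1`, with `Lᵢ = ℝzᵢ ⊕ ℝyᵢ ⊕ Hᵢ` as vector spaces, `⁅zᵢ, yᵢ⁆ = 0`, and
the restrictions of `ad zᵢ`, `ad yᵢ` to `Hᵢ` linearly independent. Then `L₁ ≅ L₂` iff there
are a linear isomorphism `σ : H₁ → H₂` and scalars `α, β, γ, δ` with `αδ - βγ ≠ 0` such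
that `σ ⁅z₁, x⁆ = γ • ⁅z₂, σ x⁆ + α • ⁅y₂, σ x⁆` and
`σ ⁅y₁, x⁆ = δ • ⁅z₂, σ x⁆ + β • ⁅y₂, σ x⁆` for all `x ∈ H₁`. -/
theorem stmt13 (n : ℕ) (hn : 1 ≤ n)
    (L₁ : Type) [LieRing L₁] [LieAlgebra ℝ L₁] [FiniteDimensional ℝ L₁]
    (L₂ : Type) [LieRing L₂] [LieAlgebra ℝ L₂] [FiniteDimensional ℝ L₂]
    (H₁ : LieIdeal ℝ L₁) (hH₁ : H₁ = LieAlgebra.derivedSeries ℝ L₁ 1)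
    (H₂ : LieIdeal ℝ L₂) (hH₂ : H₂ = LieAlgebra.derivedSeries ℝ L₂ 1)
    (hab₁ : IsLieAbelian ↥H₁) (hab₂ : IsLieAbelian ↥H₂)
    (hd₁ : Module.finrank ℝ ↥H₁ = n) (hd₂ : Module.finrank ℝ ↥H₂ = n)
    (z₁ y₁ : L₁) (z₂ y₂ : L₂)
    (hsup₁ : Submodule.span ℝ {z₁} ⊔ Submodule.span ℝ {y₁} ⊔ H₁.toSubmodule = ⊤)
    (hzind₁ : Submodule.span ℝ {z₁} ⊓ (Submodule.span ℝ {y₁} ⊔ H₁.toSubmodule) = ⊥)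
    (hyind₁ : Submodule.span ℝ {y₁} ⊓ H₁.toSubmodule = ⊥)
    (hsup₂ : Submodule.span ℝ {z₂} ⊔ Submodule.span ℝ {y₂} ⊔ H₂.toSubmodule = ⊤)
    (hzind₂ : Submodule.span ℝ {z₂} ⊓ (Submodule.span ℝ {y₂} ⊔ H₂.toSubmodule) = ⊥)
    (hyind₂ : Submodule.span ℝ {y₂} ⊓ H₂.toSubmodule = ⊥)
    (hzy₁ : ⁅z₁, y₁⁆ = 0) (hzy₂ : ⁅z₂, y₂⁆ = 0)
    (f₁ g₁ : Module.End ℝ ↥H₁)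
    (hf₁ : ∀ x : ↥H₁, (f₁ x : L₁) = ⁅z₁, (x : L₁)⁆)
    (hg₁ : ∀ x : ↥H₁, (g₁ x : L₁) = ⁅y₁, (x : L₁)⁆)
    (f₂ g₂ : Module.End ℝ ↥H₂)
    (hf₂ : ∀ x : ↥H₂, (f₂ x : L₂) = ⁅z₂, (x : L₂)⁆)
    (hg₂ : ∀ x : ↥H₂, (g₂ x : L₂) = ⁅y₂, (x : L₂)⁆)
    (hli₁ : LinearIndependent ℝ ![f₁, g₁]) (hli₂ : LinearIndependent ℝ ![f₂, g₂]) :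
    Nonempty (L₁ ≃ₗ⁅ℝ⁆ L₂) ↔
      ∃ (σ : ↥H₁ ≃ₗ[ℝ] ↥H₂) (α β γ δ : ℝ),
        α * δ - β * γ ≠ 0 ∧
        (∀ x : ↥H₁, ((σ ⟨⁅z₁, (x : L₁)⁆, H₁.lie_mem x.2⟩ : ↥H₂) : L₂)
            = γ • ⁅z₂, ((σ x : ↥H₂) : L₂)⁆ + α • ⁅y₂, ((σ x : ↥H₂) : L₂)⁆) ∧
        (∀ x : ↥H₁, ((σ ⟨⁅y₁, (x : L₁)⁆, H₁.lie_mem x.2⟩ : ↥H₂) : L₂)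
            = δ • ⁅z₂, ((σ x : ↥H₂) : L₂)⁆ + β • ⁅y₂, ((σ x : ↥H₂) : L₂)⁆) := by
  -- nonvanishing of the distinguished elements
  have hf₁ne : f₁ ≠ 0 := by simpa using hli₁.ne_zero 0
  have hg₁ne : g₁ ≠ 0 := by simpa using hli₁.ne_zero 1
  have hf₂ne : f₂ ≠ 0 := by simpa using hli₂.ne_zero 0
  have hg₂ne : g₂ ≠ 0 := by simpa using hli₂.ne_zero 1
  have hz₁0 : z₁ ≠ 0 := by
    intro h0
    refine hf₁ne (LinearMap.ext fun x => Subtype.ext ?_)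
    simp [hf₁ x, h0]
  have hy₁0 : y₁ ≠ 0 := by
    intro h0
    refine hg₁ne (LinearMap.ext fun x => Subtype.ext ?_)
    simp [hg₁ x, h0]
  have hz₂0 : z₂ ≠ 0 := by
    intro h0
    refine hf₂ne (LinearMap.ext fun x => Subtype.ext ?_)
    simp [hf₂ x, h0]
  have hy₂0 : y₂ ≠ 0 := by
    intro h0
    refine hg₂ne (LinearMap.ext fun x => Subtype.ext ?_)
    simp [hg₂ x, h0]
  -- decompositions
  obtain ⟨a₁, b₁, p₁, hid₁, haz₁, hbz₁, hpz₁, hay₁, hby₁, hpy₁, hval₁⟩ :=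
    aux_decomp H₁.toSubmodule hz₁0 hy₁0 hsup₁ hzind₁ hyind₁
  obtain ⟨a₂, b₂, p₂, hid₂, haz₂, hbz₂, hpz₂, hay₂, hby₂, hpy₂, hval₂⟩ :=
    aux_decomp H₂.toSubmodule hz₂0 hy₂0 hsup₂ hzind₂ hyind₂
  have hyz₁ : ⁅y₁, z₁⁆ = 0 := by rw [← lie_skew, hzy₁, neg_zero]
  have hyz₂ : ⁅y₂, z₂⁆ = 0 := by rw [← lie_skew, hzy₂, neg_zero]
  constructor
  · rintro ⟨e⟩
    have hes : Function.Surjective (e : L₁ →ₗ⁅ℝ⁆ L₂) := e.surjective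
    have hmap : LieIdeal.map (e : L₁ →ₗ⁅ℝ⁆ L₂) H₁ = H₂ := by
      rw [hH₁, hH₂, LieIdeal.derivedSeries_map_eq 1 hes]
    have hmapsub : H₁.toSubmodule.map (e.toLinearEquiv : L₁ →ₗ[ℝ] L₂) = H₂.toSubmodule := by
      have h2 := LieIdeal.coe_map_of_surjective hes (I := H₁)
      rw [hmap] at h2
      exact h2.symm
    obtain ⟨σ₀, hσ₀⟩ : ∃ σ₀ : ↥H₁ ≃ₗ[ℝ] ↥H₂, ∀ x : ↥H₁, ((σ₀ x : ↥H₂) : L₂) = e ↑x :=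
      ⟨(e.toLinearEquiv.submoduleMap H₁.toSubmodule).trans (LinearEquiv.ofEq _ _ hmapsub),
        fun x => LinearEquiv.submoduleMap_apply e.toLinearEquiv H₁.toSubmodule x⟩
    have hmaplie : ∀ v v' : L₁, e ⁅v, v'⁆ = ⁅e v, e v'⁆ := fun v v' =>
      LieHom.map_lie (e : L₁ →ₗ⁅ℝ⁆ L₂) v v'
    have main : ∀ (v : L₁) (x : ↥H₁), e ⁅v, (x : L₁)⁆
        = a₂ (e v) • ⁅z₂, ((σ₀ x : ↥H₂) : L₂)⁆ + b₂ (e v) • ⁅y₂, ((σ₀ x : ↥H₂) : L₂)⁆ := by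
      intro v x
      rw [hmaplie, ← hσ₀ x]
      conv_lhs => rw [show (e v : L₂) = a₂ (e v) • z₂ + b₂ (e v) • y₂ + ↑(p₂ (e v)) from
        (hid₂ (e v)).symm]
      rw [add_lie, add_lie, smul_lie, smul_lie,
        aux_lie_abelian H₂ hab₂ _ _ (p₂ (e v)).2 (σ₀ x).2, add_zero]
    refine ⟨σ₀, b₂ (e z₁), b₂ (e y₁), a₂ (e z₁), a₂ (e y₁), ?_, ?_, ?_⟩
    · -- determinant is nonzero
      intro h0
      obtain ⟨s, t, hst, he1, he2⟩ : ∃ s t : ℝ, ¬(s = 0 ∧ t = 0) ∧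
          s * a₂ (e z₁) + t * a₂ (e y₁) = 0 ∧ s * b₂ (e z₁) + t * b₂ (e y₁) = 0 := by
        by_cases hα : b₂ (e z₁) = 0
        · by_cases hγ : a₂ (e z₁) = 0
          · exact ⟨1, 0, by simp, by simp [hγ], by simp [hα]⟩
          · refine ⟨a₂ (e y₁), -(a₂ (e z₁)), ?_, by ring, ?_⟩
            · rintro ⟨-, h⟩; exact hγ (by linarith)
            · linear_combination h0
        · refine ⟨b₂ (e y₁), -(b₂ (e z₁)), ?_, ?_, by ring⟩
          · rintro ⟨-, h⟩; exact hα (by linarith)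
          · linear_combination -h0
      have hmemH₂ : e (s • z₁ + t • y₁) ∈ H₂.toSubmodule := by
        have hadd : e (s • z₁ + t • y₁) = s • e z₁ + t • e y₁ := by
          show e.toLinearEquiv (s • z₁ + t • y₁)
            = s • e.toLinearEquiv z₁ + t • e.toLinearEquiv y₁
          rw [map_add, map_smul, map_smul]
        rw [hadd]
        rw [show (e z₁ : L₂) = a₂ (e z₁) • z₂ + b₂ (e z₁) • y₂ + ↑(p₂ (e z₁)) from
          (hid₂ _).symm]
        rw [show (e y₁ : L₂) = a₂ (e y₁) • z₂ + b₂ (e y₁) • y₂ + ↑(p₂ (e y₁)) from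
          (hid₂ _).symm]
        have hmod : s • (a₂ (e z₁) • z₂ + b₂ (e z₁) • y₂ + (↑(p₂ (e z₁)) : L₂))
            + t • (a₂ (e y₁) • z₂ + b₂ (e y₁) • y₂ + (↑(p₂ (e y₁)) : L₂))
            = (s * a₂ (e z₁) + t * a₂ (e y₁)) • z₂ + (s * b₂ (e z₁) + t * b₂ (e y₁)) • y₂
              + (s • (↑(p₂ (e z₁)) : L₂) + t • (↑(p₂ (e y₁)) : L₂)) := by module
        rw [hmod, he1, he2, zero_smul, zero_smul, zero_add, zero_add]
        exact add_mem (smul_mem _ _ (p₂ (e z₁)).2) (smul_mem _ _ (p₂ (e y₁)).2)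
      have hmemH₁ : s • z₁ + t • y₁ ∈ H₁.toSubmodule := by
        rw [← hmapsub] at hmemH₂
        obtain ⟨v', hv', hev⟩ := hmemH₂
        have hvv : v' = s • z₁ + t • y₁ := e.injective hev
        rwa [← hvv]
      obtain ⟨hs0, ht0, -⟩ := aux_uniq H₁.toSubmodule hz₁0 hy₁0 hzind₁ hyind₁
        (neg_mem hmemH₁) (show s • z₁ + t • y₁ + -(s • z₁ + t • y₁) = 0 by abel)
      exact hst ⟨hs0, ht0⟩
    · intro x
      rw [hσ₀ ⟨⁅z₁, (x : L₁)⁆, H₁.lie_mem x.2⟩]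
      exact main z₁ x
    · intro x
      rw [hσ₀ ⟨⁅y₁, (x : L₁)⁆, H₁.lie_mem x.2⟩]
      exact main y₁ x
  · rintro ⟨σ, α, β, γ, δ, hdet, hσz, hσy⟩
    have hD : γ * β - δ * α ≠ 0 := by
      intro hc; exact hdet (by linarith)
    obtain ⟨u, hu⟩ : ∃ u : L₂, u = γ • z₂ + α • y₂ := ⟨_, rfl⟩
    obtain ⟨w, hw⟩ : ∃ w : L₂, w = δ • z₂ + β • y₂ := ⟨_, rfl⟩
    obtain ⟨φ, hφapp⟩ : ∃ φ : L₁ →ₗ[ℝ] L₂,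
        ∀ v, φ v = a₁ v • u + b₁ v • w + ↑(σ (p₁ v)) :=
      ⟨LinearMap.toSpanSingleton ℝ L₂ u ∘ₗ a₁ + LinearMap.toSpanSingleton ℝ L₂ w ∘ₗ b₁ +
        H₂.toSubmodule.subtype ∘ₗ (σ.toLinearMap ∘ₗ p₁), fun v => rfl⟩
    have hφz : φ z₁ = u := by rw [hφapp, haz₁, hbz₁, hpz₁]; simp
    have hφy : φ y₁ = w := by rw [hφapp, hay₁, hby₁, hpy₁]; simp
    have hp₁h : ∀ (h : L₁) (hh : h ∈ H₁), p₁ h = ⟨h, hh⟩ := fun h hh =>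
      Subtype.ext (hval₁ h hh).2.2
    have hφh : ∀ (h : L₁) (hh : h ∈ H₁), φ h = ↑(σ ⟨h, hh⟩) := by
      intro h hh
      rw [hφapp, (hval₁ h hh).1, (hval₁ h hh).2.1, hp₁h h hh]
      simp
    have hulie : ∀ x : L₂, ⁅u, x⁆ = γ • ⁅z₂, x⁆ + α • ⁅y₂, x⁆ := by
      intro x; rw [hu]; simp [add_lie, smul_lie]
    have hwlie : ∀ x : L₂, ⁅w, x⁆ = δ • ⁅z₂, x⁆ + β • ⁅y₂, x⁆ := by
      intro x; rw [hw]; simp [add_lie, smul_lie]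
    have huw : ⁅u, w⁆ = 0 := by
      rw [hulie, hw]
      simp [lie_smul, hzy₂, hyz₂]
    have hwu : ⁅w, u⁆ = 0 := by rw [← lie_skew, huw, neg_zero]
    have hφzh : ∀ x : ↥H₁, φ ⁅z₁, (x : L₁)⁆ = ⁅u, ((σ x : ↥H₂) : L₂)⁆ := by
      intro x
      rw [hφh _ (H₁.lie_mem x.2), hσz x, hulie]
    have hφyh : ∀ x : ↥H₁, φ ⁅y₁, (x : L₁)⁆ = ⁅w, ((σ x : ↥H₂) : L₂)⁆ := by
      intro x
      rw [hφh _ (H₁.lie_mem x.2), hσy x, hwlie]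
    -- bracket preservation
    have hbr : ∀ v v' : L₁, φ ⁅v, v'⁆ = ⁅φ v, φ v'⁆ := by
      intro v v'
      have hv : v = a₁ v • z₁ + b₁ v • y₁ + ↑(p₁ v) := (hid₁ v).symm
      have hv' : v' = a₁ v' • z₁ + b₁ v' • y₁ + ↑(p₁ v') := (hid₁ v').symm
      have ehz : ⁅((p₁ v : L₁)), z₁⁆ = -⁅z₁, (p₁ v : L₁)⁆ := by
        rw [← lie_skew z₁ ((p₁ v : L₁)), neg_neg]
      have ehy : ⁅((p₁ v : L₁)), y₁⁆ = -⁅y₁, (p₁ v : L₁)⁆ := by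
        rw [← lie_skew y₁ ((p₁ v : L₁)), neg_neg]
      have ehh : ⁅((p₁ v : L₁)), ((p₁ v' : L₁))⁆ = 0 :=
        aux_lie_abelian H₁ hab₁ _ _ (p₁ v).2 (p₁ v').2
      have hlie : ⁅v, v'⁆ = a₁ v • ⁅z₁, ((p₁ v' : L₁))⁆ + b₁ v • ⁅y₁, ((p₁ v' : L₁))⁆
          - a₁ v' • ⁅z₁, ((p₁ v : L₁))⁆ - b₁ v' • ⁅y₁, ((p₁ v : L₁))⁆ := by
        conv_lhs => rw [hv, hv']
        simp only [add_lie, lie_add, smul_lie, lie_smul, lie_self, hzy₁, hyz₁,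
          ehz, ehy, ehh, smul_zero, smul_neg, zero_add, add_zero]
        abel
      -- the σ-side brackets
      have eσz : ⁅(((σ (p₁ v)) : ↥H₂) : L₂), u⁆ = -⁅u, (((σ (p₁ v)) : ↥H₂) : L₂)⁆ := by
        rw [← lie_skew u (((σ (p₁ v)) : ↥H₂) : L₂), neg_neg]
      have eσw : ⁅(((σ (p₁ v)) : ↥H₂) : L₂), w⁆ = -⁅w, (((σ (p₁ v)) : ↥H₂) : L₂)⁆ := by
        rw [← lie_skew w (((σ (p₁ v)) : ↥H₂) : L₂), neg_neg]
      have eσσ : ⁅(((σ (p₁ v)) : ↥H₂) : L₂), (((σ (p₁ v')) : ↥H₂) : L₂)⁆ = 0 :=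
        aux_lie_abelian H₂ hab₂ _ _ (σ (p₁ v)).2 (σ (p₁ v')).2
      have hlie2 : ⁅φ v, φ v'⁆ = a₁ v • ⁅u, (((σ (p₁ v')) : ↥H₂) : L₂)⁆
          + b₁ v • ⁅w, (((σ (p₁ v')) : ↥H₂) : L₂)⁆
          - a₁ v' • ⁅u, (((σ (p₁ v)) : ↥H₂) : L₂)⁆
          - b₁ v' • ⁅w, (((σ (p₁ v)) : ↥H₂) : L₂)⁆ := by
        rw [hφapp v, hφapp v']
        simp only [add_lie, lie_add, smul_lie, lie_smul, lie_self, huw, hwu,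
          eσz, eσw, eσσ, smul_zero, smul_neg, zero_add, add_zero]
        abel
      rw [hlie, hlie2, map_sub, map_sub, map_add, map_smul, map_smul, map_smul, map_smul,
        hφzh (p₁ v'), hφyh (p₁ v'), hφzh (p₁ v), hφyh (p₁ v)]
    -- injectivity
    have hker : ∀ v, φ v = 0 → v = 0 := by
      intro v hv
      rw [hφapp v] at hv
      have hv2 : (a₁ v * γ + b₁ v * δ) • z₂ + (a₁ v * α + b₁ v * β) • y₂
          + (↑(σ (p₁ v)) : L₂) = 0 := by
        rw [← hv, hu, hw]; module
      obtain ⟨e1, e2, e3⟩ := aux_uniq H₂.toSubmodule hz₂0 hy₂0 hzind₂ hyind₂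
        (σ (p₁ v)).2 hv2
      have hs : a₁ v = 0 := by
        have : a₁ v * (γ * β - δ * α) = 0 := by linear_combination β * e1 - δ * e2
        rcases mul_eq_zero.mp this with h | h
        · exact h
        · exact absurd h hD
      have ht : b₁ v = 0 := by
        have : b₁ v * (γ * β - δ * α) = 0 := by linear_combination -α * e1 + γ * e2
        rcases mul_eq_zero.mp this with h | h
        · exact h
        · exact absurd h hD
      have hp : p₁ v = 0 := by
        have : σ (p₁ v) = 0 := Subtype.ext e3
        simpa using σ.injective (by simpa using this)
      rw [← hid₁ v, hs, ht, hp]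
      simp
    have hinj : Function.Injective φ := by
      intro v v' hvv'
      have h0 : φ (v - v') = 0 := by rw [map_sub, hvv', sub_self]
      exact sub_eq_zero.mp (hker _ h0)
    -- surjectivity
    have hsurj : Function.Surjective φ := by
      intro x₂
      obtain ⟨s, hs⟩ : ∃ s : ℝ, s = (β * a₂ x₂ - δ * b₂ x₂) / (γ * β - δ * α) := ⟨_, rfl⟩
      obtain ⟨t, ht⟩ : ∃ t : ℝ, t = (γ * b₂ x₂ - α * a₂ x₂) / (γ * β - δ * α) := ⟨_, rfl⟩
      refine ⟨s • z₁ + t • y₁ + ↑(σ.symm (p₂ x₂)), ?_⟩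
      have hσsymm : φ ↑(σ.symm (p₂ x₂)) = ↑(p₂ x₂) := by
        rw [hφh _ (σ.symm (p₂ x₂)).2]
        have h1 : (⟨↑(σ.symm (p₂ x₂)), (σ.symm (p₂ x₂)).2⟩ : ↥H₁) = σ.symm (p₂ x₂) := rfl
        rw [h1, σ.apply_symm_apply]
      rw [map_add, map_add, map_smul, map_smul, hφz, hφy, hσsymm]
      have hsγ : s * γ + t * δ = a₂ x₂ := by
        rw [hs, ht, div_mul_eq_mul_div, div_mul_eq_mul_div, ← add_div, div_eq_iff hD]; ring
      have hsα : s * α + t * β = b₂ x₂ := by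
        rw [hs, ht, div_mul_eq_mul_div, div_mul_eq_mul_div, ← add_div, div_eq_iff hD]; ring
      have hmod : s • u + t • w + (↑(p₂ x₂) : L₂)
          = (s * γ + t * δ) • z₂ + (s * α + t * β) • y₂ + ↑(p₂ x₂) := by
        rw [hu, hw]; module
      rw [hmod, hsγ, hsα, hid₂ x₂]
    exact ⟨LieEquiv.ofBijective ⟨φ, fun {x y} => hbr x y⟩ ⟨hinj, hsurj⟩⟩
end

section
/- Let n ≥ 2 and let L be an indecomposable solvable real Lie algebra with dim L = n + 2 whose derived algebra H := [L,L] is nilpotent of dimension n. Suppose there exist z', y' ∈ L with L = ℝz' ⊕ ℝy' ⊕ H as vector spaces such that at least one of the following holds: (a) there is v ∈ H with [y', x] = [v, x] for all x ∈ H, or (b) setting K' := ℝy' ⊕ H, there is w ∈ K' with [z', x] = [w, x] for all x ∈ K'. Then there exist z, y ∈ L ∖ H with L = ℝz ⊕ ℝy ⊕ H as vector spaces, [y, x] = 0 for all x ∈ H, and such that, setting K := ℝy ⊕ H, there is no w ∈ K with [z, x] = [w, x] for all x ∈ K. -/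
attribute [local instance] LieRing.ofAssociativeRing

theorem aux_decomp_s14 (L : Type) [LieRing L] [LieAlgebra ℝ L]
    (c : L) (K : Submodule ℝ L)
    (hKlie : ∀ x ∈ K, ∀ y ∈ K, ⁅x, y⁆ ∈ K)
    (hc : ∀ x ∈ K, ⁅c, x⁆ = 0)
    (hc0 : c ≠ 0)
    (hdisj : Disjoint (Submodule.span ℝ {c}) K)
    (hcod : Submodule.span ℝ {c} ⊔ K = ⊤)
    (hKnt : ∃ x ∈ K, x ≠ 0) :
    Decomposable L := by
  set K' : LieSubalgebra ℝ L :=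
    { K with lie_mem' := fun {x y} hx hy => hKlie x hx y hy } with hK'
  have hcompl : IsCompl (Submodule.span ℝ {c}) K := ⟨hdisj, codisjoint_iff.mpr hcod⟩
  let f : (ℝ × ↥K') →ₗ[ℝ] L :=
    (LinearMap.toSpanSingleton ℝ L c).coprod (Submodule.subtype K)
  have hf : ∀ p : ℝ × ↥K', f p = p.1 • c + (p.2 : L) := fun p => rfl
  have hinj : Function.Injective f := by
    rw [injective_iff_map_eq_zero]
    rintro ⟨t, k⟩ h
    rw [hf] at h
    have h1 : t • c ∈ Submodule.span ℝ {c} :=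
      Submodule.smul_mem _ _ (Submodule.mem_span_singleton_self c)
    have h2 : t • c ∈ K := by
      have : t • c = -(k : L) := eq_neg_of_add_eq_zero_left h
      rw [this]; exact neg_mem k.2
    have h0 : t • c = 0 := by
      have := hdisj.le_bot ⟨h1, h2⟩
      simpa using this
    have ht : t = 0 := by
      rcases smul_eq_zero.mp h0 with ht | hc'
      · exact ht
      · exact absurd hc' hc0
    have hk : (k : L) = 0 := by rw [ht, zero_smul, zero_add] at h; exact h
    exact Prod.ext ht (Subtype.ext hk)
  have hsurj : Function.Surjective f := by
    intro x
    have hx : x ∈ Submodule.span ℝ {c} ⊔ K := hcod ▸ Submodule.mem_top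
    obtain ⟨a, ha, b, hb, rfl⟩ := Submodule.mem_sup.mp hx
    obtain ⟨t, rfl⟩ := Submodule.mem_span_singleton.mp ha
    exact ⟨(t, ⟨b, hb⟩), rfl⟩
  let e : (ℝ × ↥K') ≃ₗ[ℝ] L := LinearEquiv.ofBijective f ⟨hinj, hsurj⟩
  have he : ∀ p : ℝ × ↥K', e p = p.1 • c + (p.2 : L) := hf
  have hmaplie : ∀ p q : ℝ × ↥K', e ⁅p, q⁆ = ⁅e p, e q⁆ := by
    rintro ⟨t, k⟩ ⟨t', k'⟩
    have hb : (⁅(t, k), (t', k')⁆ : ℝ × ↥K') = (0, ⁅k, k'⁆) := by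
      show (⁅t, t'⁆, ⁅k, k'⁆) = (0, ⁅k, k'⁆)
      simp [Ring.lie_def, mul_comm]
    rw [hb, he, he, he]
    have h1 : ⁅c, (k' : L)⁆ = 0 := hc _ k'.2
    have h2 : ⁅(k : L), c⁆ = 0 := by rw [← lie_skew, hc _ k.2, neg_zero]
    have h3 : ((⁅k, k'⁆ : ↥K') : L) = ⁅(k : L), (k' : L)⁆ := rfl
    simp [lie_add, add_lie, lie_smul, smul_lie, h1, h2, h3]
  have hnt : Nontrivial ↥K' := by
    obtain ⟨x, hx, hx0⟩ := hKnt
    exact ⟨⟨⟨x, hx⟩, 0, by simpa [Subtype.ext_iff] using hx0⟩⟩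
  refine ⟨ℝ, ↥K', inferInstance, inferInstance, inferInstance, inferInstance,
    inferInstance, hnt, ⟨?_⟩⟩
  let g : (ℝ × ↥K') ≃ₗ⁅ℝ⁆ L :=
    { e with map_lie' := by intro x y; exact hmaplie x y }
  exact g.symm

theorem aux_not_inner (n : ℕ) (hn : 1 ≤ n) (L : Type) [LieRing L] [LieAlgebra ℝ L]
    [FiniteDimensional ℝ L]
    (hindec : ¬ Decomposable L)
    (hdim : Module.finrank ℝ L = n + 2)
    (H : LieIdeal ℝ L) (hbr : ∀ a b : L, ⁅a, b⁆ ∈ H.toSubmodule)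
    (hHdim : Module.finrank ℝ ↥H = n)
    (z y : L)
    (hsup : Submodule.span ℝ {z} ⊔ Submodule.span ℝ {y} ⊔ H.toSubmodule = ⊤)
    (hzind : Submodule.span ℝ {z} ⊓ (Submodule.span ℝ {y} ⊔ H.toSubmodule) = ⊥) :
    ¬ (∃ w ∈ Submodule.span ℝ {y} ⊔ H.toSubmodule,
          ∀ x ∈ Submodule.span ℝ {y} ⊔ H.toSubmodule, ⁅z, x⁆ = ⁅w, x⁆) := by
  rintro ⟨w, hw, hbw⟩
  set K : Submodule ℝ L := Submodule.span ℝ {y} ⊔ H.toSubmodule with hK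
  have hHfin : Module.finrank ℝ ↥(H.toSubmodule) = n := hHdim
  have hKdim : Module.finrank ℝ ↥K ≤ n + 1 := by
    have h1 : Module.finrank ℝ ↥K ≤
        Module.finrank ℝ ↥(Submodule.span ℝ ({y} : Set L)) +
          Module.finrank ℝ ↥(H.toSubmodule) := by
      have := Submodule.finrank_sup_add_finrank_inf_eq (Submodule.span ℝ {y}) H.toSubmodule
      rw [← hK] at this
      omega
    have h2 : Module.finrank ℝ ↥(Submodule.span ℝ ({y} : Set L)) ≤ 1 := by
      rcases eq_or_ne y 0 with rfl | hy
      · rw [Submodule.span_zero_singleton, finrank_bot ℝ L]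
        omega
      · rw [show Submodule.span ℝ ({y} : Set L) = (ℝ ∙ y) from rfl,
          finrank_span_singleton hy]
    omega
  have hKne : K ≠ ⊤ := by
    intro h
    rw [h, finrank_top, hdim] at hKdim
    omega
  have hsupzK : Submodule.span ℝ {z} ⊔ K = ⊤ := by
    rw [hK, ← sup_assoc, hsup]
  have hznK : z ∉ K := by
    intro hz
    apply hKne
    rw [← hsupzK, sup_eq_right.mpr]
    rwa [Submodule.span_singleton_le_iff_mem]
  set c : L := z - w with hc
  have hc0 : c ≠ 0 := by
    intro h
    apply hznK
    have : z = w := by rwa [sub_eq_zero] at h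
    rwa [this]
  have hdisj : Disjoint (Submodule.span ℝ {c}) K := by
    rw [Submodule.disjoint_def]
    intro x hxc hxK
    obtain ⟨t, rfl⟩ := Submodule.mem_span_singleton.mp hxc
    have htz : t • z ∈ K := by
      have : t • z = t • c + t • w := by rw [hc, smul_sub]; abel
      rw [this]
      exact K.add_mem hxK (K.smul_mem t hw)
    have htz0 : t • z = 0 := by
      have : t • z ∈ Submodule.span ℝ {z} ⊓ K :=
        ⟨Submodule.smul_mem _ _ (Submodule.mem_span_singleton_self z), htz⟩
      rw [hzind] at this
      exact this
    rcases smul_eq_zero.mp htz0 with ht | hz0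
    · rw [ht, zero_smul]
    · exact absurd (hz0 ▸ K.zero_mem) hznK
  have hcod : Submodule.span ℝ {c} ⊔ K = ⊤ := by
    have hz : z ∈ Submodule.span ℝ {c} ⊔ K := by
      have : z = c + w := by rw [hc]; abel
      rw [this]
      exact Submodule.add_mem _ (Submodule.mem_sup_left (Submodule.mem_span_singleton_self c))
        (Submodule.mem_sup_right hw)
    rw [← top_le_iff, ← hsupzK]
    exact sup_le ((Submodule.span_singleton_le_iff_mem _ _).mpr hz) le_sup_right
  have hKlie : ∀ a ∈ K, ∀ b ∈ K, ⁅a, b⁆ ∈ K := fun a _ b _ =>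
    Submodule.mem_sup_right (hbr a b)
  have hcbr : ∀ x ∈ K, ⁅c, x⁆ = 0 := by
    intro x hx
    rw [hc, sub_lie, hbw x hx, sub_self]
  have hKnt : ∃ x ∈ K, x ≠ 0 := by
    by_contra h
    push_neg at h
    have : H.toSubmodule = ⊥ := by
      rw [Submodule.eq_bot_iff]
      intro x hx
      exact h x (Submodule.mem_sup_right hx)
    rw [this, finrank_bot ℝ L] at hHfin
    omega
  exact hindec (aux_decomp_s14 L c K hKlie hcbr hc0 hdisj hcod hKnt)


/-- Let `L` be an indecomposable solvable real Lie algebra of dimension `n + 2` (`n ≥ 2`)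
whose derived algebra `H := [L,L]` is nilpotent of dimension `n`. If there are
`z', y' ∈ L` with `L = ℝz' ⊕ ℝy' ⊕ H` such that the restriction of `ad y'` to `H` is
inner, or (with `K' := ℝy' ⊕ H`) the restriction of `ad z'` to `K'` is inner, then there
are `z, y ∈ L ∖ H` with `L = ℝz ⊕ ℝy ⊕ H`, `⁅y, H⁆ = 0`, and such that, setting
`K := ℝy ⊕ H`, the restriction of `ad z` to `K` is not inner. -/
theorem stmt14 (n : ℕ) (hn : 2 ≤ n) (L : Type) [LieRing L] [LieAlgebra ℝ L]
    [FiniteDimensional ℝ L] [LieAlgebra.IsSolvable L]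
    (hindec : ¬ Decomposable L)
    (hdim : Module.finrank ℝ L = n + 2)
    (H : LieIdeal ℝ L) (hH : H = LieAlgebra.derivedSeries ℝ L 1)
    (hnil : LieRing.IsNilpotent ↥H)
    (hHdim : Module.finrank ℝ ↥H = n)
    (z' y' : L)
    (hsup' : Submodule.span ℝ {z'} ⊔ Submodule.span ℝ {y'} ⊔ H.toSubmodule = ⊤)
    (hzind' : Submodule.span ℝ {z'} ⊓ (Submodule.span ℝ {y'} ⊔ H.toSubmodule) = ⊥)
    (hyind' : Submodule.span ℝ {y'} ⊓ H.toSubmodule = ⊥)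
    (hor : (∃ v ∈ H, ∀ x ∈ H, ⁅y', x⁆ = ⁅v, x⁆) ∨
           (∃ w ∈ Submodule.span ℝ {y'} ⊔ H.toSubmodule,
              ∀ x ∈ Submodule.span ℝ {y'} ⊔ H.toSubmodule, ⁅z', x⁆ = ⁅w, x⁆)) :
    ∃ z y : L, z ∉ H ∧ y ∉ H ∧
      Submodule.span ℝ {z} ⊔ Submodule.span ℝ {y} ⊔ H.toSubmodule = ⊤ ∧
      Submodule.span ℝ {z} ⊓ (Submodule.span ℝ {y} ⊔ H.toSubmodule) = ⊥ ∧
      Submodule.span ℝ {y} ⊓ H.toSubmodule = ⊥ ∧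
      (∀ x ∈ H, ⁅y, x⁆ = 0) ∧
      ¬ (∃ w ∈ Submodule.span ℝ {y} ⊔ H.toSubmodule,
            ∀ x ∈ Submodule.span ℝ {y} ⊔ H.toSubmodule, ⁅z, x⁆ = ⁅w, x⁆) := by
  have hbr : ∀ a b : L, ⁅a, b⁆ ∈ H.toSubmodule := by
    intro a b
    rw [LieSubmodule.mem_toSubmodule, hH]
    have : LieAlgebra.derivedSeries ℝ L 1 = ⁅(⊤ : LieIdeal ℝ L), (⊤ : LieIdeal ℝ L)⁆ := by
      rw [LieAlgebra.derivedSeries_def, LieAlgebra.derivedSeriesOfIdeal_succ,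
        LieAlgebra.derivedSeriesOfIdeal_zero]
    rw [this]
    exact LieSubmodule.lie_mem_lie (LieSubmodule.mem_top a) (LieSubmodule.mem_top b)
  have hspan1 : ∀ u : L, Module.finrank ℝ ↥(Submodule.span ℝ ({u} : Set L)) ≤ 1 := by
    intro u
    rcases eq_or_ne u 0 with rfl | hu
    · rw [Submodule.span_zero_singleton, finrank_bot ℝ L]; omega
    · rw [show Submodule.span ℝ ({u} : Set L) = (ℝ ∙ u) from rfl, finrank_span_singleton hu]
  have hsmall : ∀ u : L, Submodule.span ℝ {u} ⊔ H.toSubmodule ≠ ⊤ := by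
    intro u h
    have h1 := Submodule.finrank_sup_add_finrank_inf_eq (Submodule.span ℝ {u}) H.toSubmodule
    rw [h, finrank_top, hdim] at h1
    have h2 := hspan1 u
    have h3 : Module.finrank ℝ ↥(H.toSubmodule) = n := hHdim
    omega
  have hy'0 : y' ≠ 0 := by
    rintro rfl
    apply hsmall z'
    rwa [Submodule.span_zero_singleton, sup_bot_eq] at hsup'
  have hy'H : y' ∉ H.toSubmodule := by
    intro h
    apply hy'0
    have : y' ∈ Submodule.span ℝ {y'} ⊓ H.toSubmodule :=
      ⟨Submodule.mem_span_singleton_self y', h⟩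
    rwa [hyind'] at this
  have hz'H : z' ∉ H.toSubmodule := by
    intro h
    have hz'0 : z' = 0 := by
      have : z' ∈ Submodule.span ℝ {z'} ⊓ (Submodule.span ℝ {y'} ⊔ H.toSubmodule) :=
        ⟨Submodule.mem_span_singleton_self z', Submodule.mem_sup_right h⟩
      rwa [hzind'] at this
    apply hsmall y'
    rw [hz'0, Submodule.span_zero_singleton, bot_sup_eq] at hsup'
    exact hsup'
  rcases hor with ⟨v, hv, hbv⟩ | hb
  · -- case (a)
    have hvS : v ∈ H.toSubmodule := (LieSubmodule.mem_toSubmodule _).mpr hv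
    set y : L := y' - v with hy
    have hKeq : Submodule.span ℝ {y} ⊔ H.toSubmodule
        = Submodule.span ℝ {y'} ⊔ H.toSubmodule := by
      apply le_antisymm
      · apply sup_le _ le_sup_right
        rw [Submodule.span_singleton_le_iff_mem]
        exact Submodule.sub_mem _ (Submodule.mem_sup_left (Submodule.mem_span_singleton_self y'))
          (Submodule.mem_sup_right hvS)
      · apply sup_le _ le_sup_right
        rw [Submodule.span_singleton_le_iff_mem]
        have : y' = y + v := by rw [hy]; abel
        rw [this]
        exact Submodule.add_mem _ (Submodule.mem_sup_left (Submodule.mem_span_singleton_self y))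
          (Submodule.mem_sup_right hvS)
    have hsup : Submodule.span ℝ {z'} ⊔ Submodule.span ℝ {y} ⊔ H.toSubmodule = ⊤ := by
      rw [sup_assoc, hKeq, ← sup_assoc, hsup']
    have hzind : Submodule.span ℝ {z'} ⊓ (Submodule.span ℝ {y} ⊔ H.toSubmodule) = ⊥ := by
      rw [hKeq]; exact hzind'
    have hyH : y ∉ H.toSubmodule := by
      intro h
      apply hy'H
      have : y' = y + v := by rw [hy]; abel
      rw [this]
      exact Submodule.add_mem _ h hvS
    refine ⟨z', y, hz'H, hyH, hsup, hzind, ?_, ?_, ?_⟩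
    · rw [Submodule.eq_bot_iff]
      rintro x ⟨hx1, hx2⟩
      obtain ⟨t, rfl⟩ := Submodule.mem_span_singleton.mp hx1
      have hty' : t • y' ∈ H.toSubmodule := by
        have : t • y' = t • y + t • v := by rw [hy, smul_sub]; abel
        rw [this]
        exact Submodule.add_mem _ hx2 (Submodule.smul_mem _ _ hvS)
      have : t • y' = 0 := by
        have : t • y' ∈ Submodule.span ℝ {y'} ⊓ H.toSubmodule :=
          ⟨Submodule.smul_mem _ _ (Submodule.mem_span_singleton_self y'), hty'⟩
        rwa [hyind'] at this
      rcases smul_eq_zero.mp this with ht | h0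
      · rw [ht, zero_smul]
      · exact absurd h0 hy'0
    · intro x hx
      rw [hy, sub_lie, hbv x hx, sub_self]
    · exact aux_not_inner n (by omega) L hindec hdim H hbr hHdim z' y hsup hzind
  · -- case (b)
    exact absurd hb (aux_not_inner n (by omega) L hindec hdim H hbr hHdim z' y' hsup' hzind')
end

section
/- Let n ≥ 2 and let L be a solvable real Lie algebra with dim L = n + 2 whose derived algebra H := [L,L] is nilpotent of dimension n, and let z, y ∈ L be such that L = ℝz ⊕ ℝy ⊕ H as vector spaces and [y, x] = 0 for all x ∈ H. Then there is no element u ∈ H with [z, x] = [u, x] for all x ∈ H; that is, the restriction of ad z to H is an outer derivation of H. -/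
/-- Let `L` be a solvable real Lie algebra of dimension `n + 2` (`n ≥ 2`) whose derived
algebra `H := [L,L]` is nilpotent of dimension `n`, and `z, y ∈ L` with
`L = ℝz ⊕ ℝy ⊕ H` as vector spaces and `⁅y, H⁆ = 0`. Then the restriction of `ad z`
to `H` is an outer derivation of `H`: no `u ∈ H` satisfies `⁅z, x⁆ = ⁅u, x⁆` for all
`x ∈ H`. -/
theorem stmt15 (n : ℕ) (hn : 2 ≤ n) (L : Type) [LieRing L] [LieAlgebra ℝ L]
    [FiniteDimensional ℝ L] [LieAlgebra.IsSolvable L]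
    (hdim : Module.finrank ℝ L = n + 2)
    (H : LieIdeal ℝ L) (hH : H = LieAlgebra.derivedSeries ℝ L 1)
    (hnil : LieRing.IsNilpotent ↥H)
    (hHdim : Module.finrank ℝ ↥H = n)
    (z y : L)
    (hsup : Submodule.span ℝ {z} ⊔ Submodule.span ℝ {y} ⊔ H.toSubmodule = ⊤)
    (hzind : Submodule.span ℝ {z} ⊓ (Submodule.span ℝ {y} ⊔ H.toSubmodule) = ⊥)
    (hyind : Submodule.span ℝ {y} ⊓ H.toSubmodule = ⊥)
    (hy : ∀ x ∈ H, ⁅y, x⁆ = 0) :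
    ¬ ∃ u ∈ H, ∀ x ∈ H, ⁅z, x⁆ = ⁅u, x⁆ := by
  rintro ⟨u, hu, huz⟩
  classical
  -- The derived ideal of `H` (as a Lie algebra in its own right)
  set D' : LieIdeal ℝ ↥H := LieAlgebra.derivedSeries ℝ ↥H 1 with hD'def
  -- Its image inside `L`
  set D : Submodule ℝ L := Submodule.map H.toSubmodule.subtype D'.toSubmodule with hDdef
  have hD'top : D' = ⁅(⊤ : LieIdeal ℝ ↥H), (⊤ : LieIdeal ℝ ↥H)⁆ := by
    rw [hD'def, LieAlgebra.derivedSeries_def, LieAlgebra.derivedSeriesOfIdeal_succ,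
      LieAlgebra.derivedSeriesOfIdeal_zero]
  -- brackets of elements of H lie in D
  have hmemD : ∀ a ∈ H, ∀ b ∈ H, ⁅a, b⁆ ∈ D := by
    intro a ha b hb
    refine ⟨⁅(⟨a, ha⟩ : ↥H), (⟨b, hb⟩ : ↥H)⁆, ?_, rfl⟩
    rw [hD'top]
    exact LieSubmodule.lie_mem_lie (LieSubmodule.mem_top _) (LieSubmodule.mem_top _)
  have hDH : D ≤ H.toSubmodule := by
    rintro x ⟨w, -, rfl⟩; exact w.2
  set T : Submodule ℝ L := Submodule.span ℝ {⁅z, y⁆} ⊔ D with hTdef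
  -- decomposition of arbitrary elements of L
  have hdec : ∀ p : L, ∃ α β : ℝ, ∃ h ∈ H, p = α • z + (β • y + h) := by
    intro p
    have hp : p ∈ Submodule.span ℝ {z} ⊔ (Submodule.span ℝ {y} ⊔ H.toSubmodule) := by
      rw [← sup_assoc, hsup]; trivial
    obtain ⟨pz, hpz, rest, hrest, rfl⟩ := Submodule.mem_sup.mp hp
    obtain ⟨py, hpy, h, hh, rfl⟩ := Submodule.mem_sup.mp hrest
    obtain ⟨α, rfl⟩ := Submodule.mem_span_singleton.mp hpz
    obtain ⟨β, rfl⟩ := Submodule.mem_span_singleton.mp hpy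
    exact ⟨α, β, h, hh, rfl⟩
  have hzyT : ⁅z, y⁆ ∈ T := Submodule.mem_sup_left (Submodule.mem_span_singleton_self _)
  have skew : ∀ p q : L, ⁅p, q⁆ = -⁅q, p⁆ := fun p q => by rw [← lie_skew]
  have skewH : ∀ p q : (↥H : Type), ⁅p, q⁆ = -⁅q, p⁆ := fun p q => by rw [← lie_skew]
  -- Step 1 : H ⊆ span{⁅z,y⁆} ⊔ D
  have hstep1 : H.toSubmodule ≤ T := by
    have hHeq : H.toSubmodule =
        Submodule.span ℝ {m | ∃ x ∈ (⊤ : LieIdeal ℝ L), ∃ q ∈ (⊤ : LieIdeal ℝ L), ⁅x, q⁆ = m} := by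
      rw [hH, LieAlgebra.derivedSeries_def, LieAlgebra.derivedSeriesOfIdeal_succ,
        LieAlgebra.derivedSeriesOfIdeal_zero]
      exact LieSubmodule.lieIdeal_oper_eq_linear_span' _ _
    rw [hHeq]
    apply Submodule.span_le.mpr
    rintro m ⟨p, -, q, -, rfl⟩
    obtain ⟨α, β, h, hh, rfl⟩ := hdec p
    obtain ⟨γ, δ, k, hk, rfl⟩ := hdec q
    have hzq : ⁅z, γ • z + (δ • y + k)⁆ ∈ T := by
      rw [lie_add, lie_add, lie_smul, lie_smul, lie_self, smul_zero, zero_add, huz k hk]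
      exact add_mem (Submodule.smul_mem _ _ hzyT) (Submodule.mem_sup_right (hmemD u hu k hk))
    have hyq : ⁅y, γ • z + (δ • y + k)⁆ ∈ T := by
      rw [lie_add, lie_add, lie_smul, lie_smul, lie_self, smul_zero, zero_add, hy k hk,
        add_zero, skew y z]
      exact Submodule.smul_mem _ _ (neg_mem hzyT)
    have hhq : ⁅h, γ • z + (δ • y + k)⁆ ∈ T := by
      rw [lie_add, lie_add, lie_smul, lie_smul, skew h z, huz h hh, skew h y,
        hy h hh, neg_zero, smul_zero, zero_add]
      exact add_mem (Submodule.smul_mem _ _ (neg_mem (Submodule.mem_sup_right (hmemD u hu h hh))))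
        (Submodule.mem_sup_right (hmemD h hh k hk))
    rw [add_lie, add_lie, smul_lie, smul_lie]
    exact add_mem (Submodule.smul_mem _ _ hzq)
      (add_mem (Submodule.smul_mem _ _ hyq) hhq)
  have hHfr : Module.finrank ℝ H.toSubmodule = n := hHdim
  -- dimension count : n ≤ 1 + dim D
  have hnD : n ≤ 1 + Module.finrank ℝ D := by
    calc n = Module.finrank ℝ H.toSubmodule := hHfr.symm
    _ ≤ Module.finrank ℝ T := Submodule.finrank_mono hstep1
    _ ≤ Module.finrank ℝ ↥(Submodule.span ℝ {⁅z, y⁆}) + Module.finrank ℝ D :=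
        Submodule.finrank_add_le_finrank_add_finrank _ _
    _ ≤ 1 + Module.finrank ℝ D := by
        gcongr
        simpa using finrank_span_le_card ({⁅z, y⁆} : Set L)
  -- find a ∈ H with H = span{a} ⊔ D
  obtain ⟨a, haH, hspan⟩ : ∃ a ∈ H, H.toSubmodule ≤ Submodule.span ℝ {a} ⊔ D := by
    by_cases hDeq : D = H.toSubmodule
    · exact ⟨0, H.zero_mem, by rw [hDeq]; exact le_sup_right⟩
    · obtain ⟨a, haH, haD⟩ := SetLike.exists_of_lt (lt_of_le_of_ne hDH hDeq)
      refine ⟨a, haH, ?_⟩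
      have hle : Submodule.span ℝ {a} ⊔ D ≤ H.toSubmodule :=
        sup_le ((Submodule.span_singleton_le_iff_mem _ _).mpr haH) hDH
      have hlt : D < Submodule.span ℝ {a} ⊔ D := by
        refine lt_of_le_of_ne le_sup_right fun hcon => haD ?_
        rw [hcon]
        exact Submodule.mem_sup_left (Submodule.mem_span_singleton_self _)
      have h1 : Module.finrank ℝ D < Module.finrank ℝ ↥(Submodule.span ℝ {a} ⊔ D) :=
        Submodule.finrank_lt_finrank_of_lt hlt
      have := Submodule.eq_of_le_of_finrank_le hle (by rw [hHfr]; omega)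
      rw [this]
  -- pass to ↥H
  set abar : ↥H := ⟨a, haH⟩ with habar
  have htop : (⊤ : Submodule ℝ ↥H) ≤ Submodule.span ℝ {abar} ⊔ D'.toSubmodule := by
    intro x _
    have hx : (x : L) ∈ Submodule.span ℝ {a} ⊔ D := hspan x.2
    have himg : Submodule.span ℝ {a} ⊔ D =
        Submodule.map H.toSubmodule.subtype (Submodule.span ℝ {abar} ⊔ D'.toSubmodule) := by
      rw [Submodule.map_sup, Submodule.map_span, Set.image_singleton, hDdef]
      rfl
    rw [himg] at hx
    obtain ⟨w, hw, hwx⟩ := hx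
    have : w = x := Subtype.ext hwx
    rwa [← this]
  -- D' ≤ ⁅⊤, D'⁆
  have hDle : D' ≤ ⁅(⊤ : LieIdeal ℝ ↥H), D'⁆ := by
    rw [hD'top, LieSubmodule.lieIdeal_oper_eq_span, LieSubmodule.lieSpan_le]
    rintro m ⟨⟨p, -⟩, ⟨q, -⟩, rfl⟩
    have hp : p ∈ Submodule.span ℝ {abar} ⊔ D'.toSubmodule := htop trivial
    have hq : q ∈ Submodule.span ℝ {abar} ⊔ D'.toSubmodule := htop trivial
    obtain ⟨p₁, hp₁, d₁, hd₁, rfl⟩ := Submodule.mem_sup.mp hp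
    obtain ⟨q₁, hq₁, d₂, hd₂, rfl⟩ := Submodule.mem_sup.mp hq
    obtain ⟨α, rfl⟩ := Submodule.mem_span_singleton.mp hp₁
    obtain ⟨β, rfl⟩ := Submodule.mem_span_singleton.mp hq₁
    show ⁅α • abar + d₁, β • abar + d₂⁆ ∈ ⁅(⊤ : LieIdeal ℝ ↥H), D'⁆
    have h1 : ⁅abar, β • abar + d₂⁆ ∈ ⁅(⊤ : LieIdeal ℝ ↥H), D'⁆ := by
      rw [lie_add, lie_smul, lie_self, smul_zero, zero_add]
      exact LieSubmodule.lie_mem_lie (LieSubmodule.mem_top _) hd₂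
    have h2 : ⁅d₁, β • abar + d₂⁆ ∈ ⁅(⊤ : LieIdeal ℝ ↥H), D'⁆ := by
      rw [skewH d₁ (β • abar + d₂)]
      exact neg_mem (LieSubmodule.lie_mem_lie (LieSubmodule.mem_top _) hd₁)
    rw [add_lie, smul_lie]
    exact add_mem (SMulMemClass.smul_mem α h1) h2
  -- hence D' is contained in every term of the lower central series
  have hlcs : ∀ m : ℕ, D' ≤ LieModule.lowerCentralSeries ℝ (↥H) (↥H) m := by
    intro m
    induction m with
    | zero => exact le_top
    | succ m ih =>
      rw [LieModule.lowerCentralSeries_succ]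
      exact le_trans hDle (LieSubmodule.mono_lie_right _ ih)
  obtain ⟨k, hk⟩ := (LieModule.isNilpotent_iff ℝ ↥H ↥H).mp hnil
  have hD'bot : D' = ⊥ := le_bot_iff.mp (hk ▸ hlcs k)
  have hDbot : D = ⊥ := by
    rw [hDdef, hD'bot]
    simpa using Submodule.map_bot H.toSubmodule.subtype
  -- final contradiction
  have : n ≤ 1 := by
    have h1 : H.toSubmodule ≤ Submodule.span ℝ {⁅z, y⁆} := by
      rw [hTdef, hDbot, sup_bot_eq] at hstep1
      exact hstep1
    calc n = Module.finrank ℝ H.toSubmodule := hHfr.symm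
    _ ≤ Module.finrank ℝ ↥(Submodule.span ℝ {⁅z, y⁆}) := Submodule.finrank_mono h1
    _ ≤ 1 := by simpa using finrank_span_le_card ({⁅z, y⁆} : Set L)
  omega
end

section
/- Let n ≥ 2 and let L be a solvable real Lie algebra with dim L = n + 2 whose derived algebra H := [L,L] is abelian of dimension n, and let z, y ∈ L be such that L = ℝz ⊕ ℝy ⊕ H as vector spaces and [y, x] = 0 for all x ∈ H. Then L is decomposable if and only if the linear endomorphism of H given by x ↦ [z, x] is bijective. -/
open Module LieAlgebra

lemma finrank_prod_submodule {K M N : Type*} [Field K] [AddCommGroup M] [Module K M]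
    [AddCommGroup N] [Module K N] (p : Submodule K M) (q : Submodule K N)
    [FiniteDimensional K p] [FiniteDimensional K q] :
    finrank K (p.prod q) = finrank K p + finrank K q := by
  have e : ↥(p.prod q) ≃ₗ[K] (↥p × ↥q) :=
    { toFun := fun x => (⟨x.val.1, x.prop.1⟩, ⟨x.val.2, x.prop.2⟩)
      invFun := fun a => ⟨(a.1.val, a.2.val), ⟨a.1.prop, a.2.prop⟩⟩
      left_inv := fun x => rfl
      right_inv := fun a => rfl
      map_add' := fun a b => rfl
      map_smul' := fun c a => rfl }
  rw [e.finrank_eq, Module.finrank_prod]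

lemma key_lemma (K : Type*) [LieRing K] [LieAlgebra ℝ K] [FiniteDimensional ℝ K]
    (hcodim : finrank ℝ K = finrank ℝ (derivedSeries ℝ K 1 : LieIdeal ℝ K) + 1)
    (habel : ∀ a b : K, a ∈ derivedSeries ℝ K 1 → b ∈ derivedSeries ℝ K 1 → ⁅a, b⁆ = 0)
    (m : K) (hm : m ∈ derivedSeries ℝ K 1)
    (hc : ∀ a : K, ⁅m, a⁆ = 0) : m = 0 := by
  set D : LieIdeal ℝ K := derivedSeries ℝ K 1 with hD
  have hDdim : finrank ℝ D.toSubmodule + 1 = finrank ℝ K := hcodim.symm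
  obtain ⟨u, hu⟩ : ∃ u, u ∉ D.toSubmodule := by
    by_contra h
    push_neg at h
    have : D.toSubmodule = ⊤ := Submodule.eq_top_iff'.mpr h
    rw [this, finrank_top] at hDdim
    omega
  have hu0 : u ≠ 0 := fun h => hu (h ▸ D.toSubmodule.zero_mem)
  have hinf : Submodule.span ℝ {u} ⊓ D.toSubmodule = ⊥ := by
    rw [Submodule.eq_bot_iff]
    rintro v ⟨hv1, hv2⟩
    obtain ⟨c, rfl⟩ := Submodule.mem_span_singleton.mp hv1
    rcases eq_or_ne c 0 with rfl | hc0
    · simp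
    · exact absurd ((Submodule.smul_mem_iff _ hc0).mp hv2) hu
  have hsup : Submodule.span ℝ {u} ⊔ D.toSubmodule = ⊤ := by
    apply Submodule.eq_top_of_finrank_eq
    have h1 := Submodule.finrank_sup_add_finrank_inf_eq (Submodule.span ℝ {u}) D.toSubmodule
    rw [hinf, finrank_bot, finrank_span_singleton hu0] at h1
    omega
  have hdec : ∀ a : K, ∃ c : ℝ, ∃ d ∈ D.toSubmodule, a = c • u + d := by
    intro a
    have ha : a ∈ (⊤ : Submodule ℝ K) := trivial
    rw [← hsup] at ha
    obtain ⟨s, hs, d, hd, rfl⟩ := Submodule.mem_sup.mp ha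
    obtain ⟨c, rfl⟩ := Submodule.mem_span_singleton.mp hs
    exact ⟨c, d, hd, rfl⟩
  set S : Submodule ℝ K := D.toSubmodule.map (LieAlgebra.ad ℝ K u) with hS
  have hDS : D.toSubmodule ≤ S := by
    have hDspan : D.toSubmodule =
        Submodule.span ℝ {x | ∃ a ∈ (⊤ : LieIdeal ℝ K), ∃ b ∈ (⊤ : LieIdeal ℝ K), ⁅a, b⁆ = x} := by
      rw [hD]
      rw [show derivedSeries ℝ K 1 = ⁅(⊤ : LieIdeal ℝ K), (⊤ : LieIdeal ℝ K)⁆ from rfl]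
      exact LieSubmodule.lieIdeal_oper_eq_linear_span' ..
    rw [hDspan, Submodule.span_le]
    rintro x ⟨a, -, b, -, rfl⟩
    obtain ⟨c, d, hd, rfl⟩ := hdec a
    obtain ⟨c', d', hd', rfl⟩ := hdec b
    have hdd' : ⁅d, d'⁆ = 0 := habel d d' hd hd'
    have : ⁅c • u + d, c' • u + d'⁆ = c • ⁅u, d'⁆ - c' • ⁅u, d⁆ := by
      rw [lie_add, add_lie, add_lie, lie_smul, lie_smul, smul_lie, smul_lie, lie_self,
        hdd', ← lie_skew u d, smul_zero, smul_neg]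
      simp
      abel
    rw [this]
    have h1 : ⁅u, d'⁆ ∈ S := ⟨d', hd', LieAlgebra.ad_apply ..⟩
    have h2 : ⁅u, d⁆ ∈ S := ⟨d, hd, LieAlgebra.ad_apply ..⟩
    exact S.sub_mem (S.smul_mem _ h1) (S.smul_mem _ h2)
  have hmap : ∀ x ∈ D.toSubmodule, (LieAlgebra.ad ℝ K u) x ∈ D.toSubmodule := by
    intro x hx
    rw [LieAlgebra.ad_apply]
    exact D.lie_mem hx
  set B : D.toSubmodule →ₗ[ℝ] D.toSubmodule := (LieAlgebra.ad ℝ K u).restrict hmap with hB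
  have hBsurj : Function.Surjective B := by
    rintro ⟨v, hv⟩
    obtain ⟨d, hd, hdv⟩ := hDS hv
    exact ⟨⟨d, hd⟩, Subtype.ext hdv⟩
  have hBinj : Function.Injective B := LinearMap.injective_iff_surjective.mpr hBsurj
  have hBm : B ⟨m, hm⟩ = 0 := by
    apply Subtype.ext
    show (LieAlgebra.ad ℝ K u) m = 0
    rw [LieAlgebra.ad_apply, ← lie_skew, hc u, neg_zero]
  exact congrArg Subtype.val (hBinj (hBm.trans (map_zero B).symm))

/-- Let `L` be a solvable real Lie algebra of dimension `n + 2` (`n ≥ 2`) whose derived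
algebra `H := [L,L]` is abelian of dimension `n`, and `z, y ∈ L` with `L = ℝz ⊕ ℝy ⊕ H`
as vector spaces and `⁅y, H⁆ = 0`. Then `L` is decomposable iff the endomorphism
`x ↦ ⁅z, x⁆` of `H` is bijective. -/
theorem stmt17 (n : ℕ) (hn : 2 ≤ n) (L : Type) [LieRing L] [LieAlgebra ℝ L]
    [FiniteDimensional ℝ L] [LieAlgebra.IsSolvable L]
    (hdim : Module.finrank ℝ L = n + 2)
    (H : LieIdeal ℝ L) (hH : H = LieAlgebra.derivedSeries ℝ L 1)
    (hab : IsLieAbelian ↥H)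
    (hHdim : Module.finrank ℝ ↥H = n)
    (z y : L)
    (hsup : Submodule.span ℝ {z} ⊔ Submodule.span ℝ {y} ⊔ H.toSubmodule = ⊤)
    (hzind : Submodule.span ℝ {z} ⊓ (Submodule.span ℝ {y} ⊔ H.toSubmodule) = ⊥)
    (hyind : Submodule.span ℝ {y} ⊓ H.toSubmodule = ⊥)
    (hy : ∀ x ∈ H, ⁅y, x⁆ = 0) :
    Decomposable L ↔
      Function.Bijective (fun x : ↥H => (⟨⁅z, (x : L)⁆, H.lie_mem x.2⟩ : ↥H)) := by
  have habL : ∀ a ∈ H, ∀ b ∈ H, ⁅a, b⁆ = (0 : L) := by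
    intro a ha b hb
    have h0 : (⁅(⟨a, ha⟩ : ↥H), (⟨b, hb⟩ : ↥H)⁆ : ↥H) = 0 := trivial_lie_zero _ _ _ _
    calc ⁅a, b⁆ = ((⁅(⟨a, ha⟩ : ↥H), (⟨b, hb⟩ : ↥H)⁆ : ↥H) : L) := rfl
      _ = ((0 : ↥H) : L) := by rw [h0]
      _ = 0 := rfl
  have hdecomp : ∀ a : L, ∃ c b : ℝ, ∃ h ∈ H.toSubmodule, a = c • z + (b • y + h) := by
    intro a
    have ha : a ∈ (⊤ : Submodule ℝ L) := trivial
    rw [← hsup] at ha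
    obtain ⟨s, hs, h, hh, rfl⟩ := Submodule.mem_sup.mp ha
    obtain ⟨s1, hs1, s2, hs2, rfl⟩ := Submodule.mem_sup.mp hs
    obtain ⟨c, rfl⟩ := Submodule.mem_span_singleton.mp hs1
    obtain ⟨b, rfl⟩ := Submodule.mem_span_singleton.mp hs2
    exact ⟨c, b, h, hh, by abel⟩
  haveI : FiniteDimensional ℝ ↥H := inferInstanceAs (FiniteDimensional ℝ H.toSubmodule)
  constructor
  · rintro ⟨L₁, L₂, i1, i2, i3, i4, nt1, nt2, ⟨e⟩⟩
    -- linear version of the map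
    set A : ↥H →ₗ[ℝ] ↥H :=
      { toFun := fun x => (⟨⁅z, (x : L)⁆, H.lie_mem x.2⟩ : ↥H)
        map_add' := fun a b => Subtype.ext (by simp [lie_add])
        map_smul' := fun c a => Subtype.ext (by simp [lie_smul]) } with hA
    suffices hinj : Function.Injective A by
      have hbij : Function.Bijective A :=
        ⟨hinj, LinearMap.injective_iff_surjective.mp hinj⟩
      exact hbij
    rw [← LinearMap.ker_eq_bot, Submodule.eq_bot_iff]
    rintro ⟨x, hxH⟩ hker
    have hzx : ⁅z, x⁆ = 0 := congrArg Subtype.val hker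
    -- x is central
    have hcent : ∀ a : L, ⁅x, a⁆ = 0 := by
      intro a
      obtain ⟨c, b, h, hh, rfl⟩ := hdecomp a
      rw [lie_add, lie_add, lie_smul, lie_smul, ← lie_skew x z, hzx, neg_zero, smul_zero,
        ← lie_skew x y, hy x hxH, neg_zero, smul_zero, habL x hxH h hh]
      abel
    -- Lie homs fst, snd, inl, inr
    let f₁ : (L₁ × L₂) →ₗ⁅ℝ⁆ L₁ := { LinearMap.fst ℝ L₁ L₂ with map_lie' := rfl }
    let f₂ : (L₁ × L₂) →ₗ⁅ℝ⁆ L₂ := { LinearMap.snd ℝ L₁ L₂ with map_lie' := rfl }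
    let g₁ : L₁ →ₗ⁅ℝ⁆ (L₁ × L₂) :=
      { LinearMap.inl ℝ L₁ L₂ with map_lie' := by intro a b; exact Prod.ext rfl (lie_self 0).symm }
    let g₂ : L₂ →ₗ⁅ℝ⁆ (L₁ × L₂) :=
      { LinearMap.inr ℝ L₁ L₂ with map_lie' := by intro a b; exact Prod.ext (lie_self 0).symm rfl }
    have hf₁s : Function.Surjective f₁ := Prod.fst_surjective
    have hf₂s : Function.Surjective f₂ := Prod.snd_surjective
    have hes : Function.Surjective e.toLieHom := e.surjective
    -- derived series relations
    have hmapL : (derivedSeries ℝ L 1).map e.toLieHom = derivedSeries ℝ (L₁ × L₂) 1 :=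
      LieIdeal.derivedSeries_map_eq 1 hes
    have hmap₁ : (derivedSeries ℝ (L₁ × L₂) 1).map f₁ = derivedSeries ℝ L₁ 1 :=
      LieIdeal.derivedSeries_map_eq 1 hf₁s
    have hmap₂ : (derivedSeries ℝ (L₁ × L₂) 1).map f₂ = derivedSeries ℝ L₂ 1 :=
      LieIdeal.derivedSeries_map_eq 1 hf₂s
    -- membership of e x
    have hxd : x ∈ derivedSeries ℝ L 1 := hH ▸ hxH
    have hexd : e x ∈ derivedSeries ℝ (L₁ × L₂) 1 := hmapL ▸ LieIdeal.mem_map hxd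
    have hp : (e x).1 ∈ derivedSeries ℝ L₁ 1 := hmap₁ ▸ LieIdeal.mem_map hexd
    have hq : (e x).2 ∈ derivedSeries ℝ L₂ 1 := hmap₂ ▸ LieIdeal.mem_map hexd
    -- e x is central
    have hecent : ∀ w : L₁ × L₂, ⁅e x, w⁆ = 0 := by
      intro w
      have : ⁅e x, e (e.symm w)⁆ = e ⁅x, e.symm w⁆ := (e.toLieHom.map_lie _ _).symm
      rw [e.apply_symm_apply] at this
      rw [this, hcent]
      exact e.toLieHom.map_zero
    have hpcent : ∀ a : L₁, ⁅(e x).1, a⁆ = 0 := fun a =>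
      congrArg Prod.fst (hecent (a, 0))
    have hqcent : ∀ b : L₂, ⁅(e x).2, b⁆ = 0 := fun b =>
      congrArg Prod.snd (hecent (0, b))
    -- abelian derived algebras
    have habprod : ∀ a b : L₁ × L₂, a ∈ derivedSeries ℝ (L₁ × L₂) 1 →
        b ∈ derivedSeries ℝ (L₁ × L₂) 1 → ⁅a, b⁆ = 0 := by
      intro a b ha hb
      rw [← hmapL] at ha hb
      rw [← LieSubmodule.mem_toSubmodule, LieIdeal.coe_map_of_surjective hes,
        Submodule.mem_map] at ha hb
      obtain ⟨a₀, ha₀, rfl⟩ := ha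
      obtain ⟨b₀, hb₀, rfl⟩ := hb
      have : ⁅a₀, b₀⁆ = (0 : L) := habL a₀ (hH ▸ ha₀) b₀ (hH ▸ hb₀)
      calc ⁅e.toLieHom a₀, e.toLieHom b₀⁆ = e.toLieHom ⁅a₀, b₀⁆ := (e.toLieHom.map_lie _ _).symm
        _ = 0 := by rw [this]; exact map_zero _
    have hab₁ : ∀ a b : L₁, a ∈ derivedSeries ℝ L₁ 1 → b ∈ derivedSeries ℝ L₁ 1 →
        ⁅a, b⁆ = 0 := by
      intro a b ha hb
      have h1 : (a, (0:L₂)) ∈ derivedSeries ℝ (L₁ × L₂) 1 :=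
        LieIdeal.derivedSeries_map_le 1 (LieIdeal.mem_map (f := g₁) ha)
      have h2 : (b, (0:L₂)) ∈ derivedSeries ℝ (L₁ × L₂) 1 :=
        LieIdeal.derivedSeries_map_le 1 (LieIdeal.mem_map (f := g₁) hb)
      exact congrArg Prod.fst (habprod _ _ h1 h2)
    have hab₂ : ∀ a b : L₂, a ∈ derivedSeries ℝ L₂ 1 → b ∈ derivedSeries ℝ L₂ 1 →
        ⁅a, b⁆ = 0 := by
      intro a b ha hb
      have h1 : ((0:L₁), a) ∈ derivedSeries ℝ (L₁ × L₂) 1 :=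
        LieIdeal.derivedSeries_map_le 1 (LieIdeal.mem_map (f := g₂) ha)
      have h2 : ((0:L₁), b) ∈ derivedSeries ℝ (L₁ × L₂) 1 :=
        LieIdeal.derivedSeries_map_le 1 (LieIdeal.mem_map (f := g₂) hb)
      exact congrArg Prod.snd (habprod _ _ h1 h2)
    -- finite dimensionality
    haveI : FiniteDimensional ℝ (L₁ × L₂) := Module.Finite.equiv e.toLinearEquiv
    haveI : FiniteDimensional ℝ L₁ :=
      Module.Finite.of_surjective (LinearMap.fst ℝ L₁ L₂) Prod.fst_surjective
    haveI : FiniteDimensional ℝ L₂ :=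
      Module.Finite.of_surjective (LinearMap.snd ℝ L₁ L₂) Prod.snd_surjective
    -- dimension bookkeeping
    have hsum1 : finrank ℝ L₁ + finrank ℝ L₂ = n + 2 := by
      rw [← Module.finrank_prod, ← e.toLinearEquiv.finrank_eq, hdim]
    -- derived ideal of the product as a product of submodules
    have hprodeq : (derivedSeries ℝ (L₁ × L₂) 1).toSubmodule =
        (derivedSeries ℝ L₁ 1).toSubmodule.prod (derivedSeries ℝ L₂ 1).toSubmodule := by
      apply le_antisymm
      · intro m hm
        exact ⟨hmap₁ ▸ LieIdeal.mem_map hm, hmap₂ ▸ LieIdeal.mem_map hm⟩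
      · rintro ⟨a, b⟩ ⟨ha, hb⟩
        have h1 : ((a, (0:L₂)) : L₁ × L₂) ∈ derivedSeries ℝ (L₁ × L₂) 1 :=
          LieIdeal.derivedSeries_map_le 1 (LieIdeal.mem_map (f := g₁) ha)
        have h2 : (((0:L₁), b) : L₁ × L₂) ∈ derivedSeries ℝ (L₁ × L₂) 1 :=
          LieIdeal.derivedSeries_map_le 1 (LieIdeal.mem_map (f := g₂) hb)
        have : ((a, b) : L₁ × L₂) = (a, 0) + (0, b) := by simp
        rw [this]
        exact (derivedSeries ℝ (L₁ × L₂) 1).add_mem h1 h2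
    have hsum2 : finrank ℝ (derivedSeries ℝ L₁ 1).toSubmodule +
        finrank ℝ (derivedSeries ℝ L₂ 1).toSubmodule = n := by
      have e1 : finrank ℝ (derivedSeries ℝ (L₁ × L₂) 1).toSubmodule = n := by
        have h2 : (derivedSeries ℝ (L₁ × L₂) 1).toSubmodule =
            (H.toSubmodule).map (e.toLinearEquiv : L →ₗ[ℝ] (L₁ × L₂)) := by
          rw [← hmapL, LieIdeal.coe_map_of_surjective hes, ← hH]
          rfl
        rw [h2, LinearEquiv.finrank_map_eq e.toLinearEquiv]
        exact hHdim
      rw [hprodeq, finrank_prod_submodule] at e1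
      exact e1
    -- strict inequalities
    haveI : LieAlgebra.IsSolvable L₁ :=
      Function.Surjective.lieAlgebra_isSolvable (f := f₁.comp e.toLieHom)
        (hf₁s.comp e.surjective)
    haveI : LieAlgebra.IsSolvable L₂ :=
      Function.Surjective.lieAlgebra_isSolvable (f := f₂.comp e.toLieHom)
        (hf₂s.comp e.surjective)
    have hlt₁ : finrank ℝ (derivedSeries ℝ L₁ 1).toSubmodule < finrank ℝ L₁ := by
      apply Submodule.finrank_lt
      intro hcon
      have : derivedSeries ℝ L₁ 1 = ⊤ := by
        rw [← LieSubmodule.toSubmodule_inj] at *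
        rw [hcon]; rfl
      exact (lt_irrefl _ (this ▸ derivedSeries_lt_top_of_solvable ℝ L₁))
    have hlt₂ : finrank ℝ (derivedSeries ℝ L₂ 1).toSubmodule < finrank ℝ L₂ := by
      apply Submodule.finrank_lt
      intro hcon
      have : derivedSeries ℝ L₂ 1 = ⊤ := by
        rw [← LieSubmodule.toSubmodule_inj] at *
        rw [hcon]; rfl
      exact (lt_irrefl _ (this ▸ derivedSeries_lt_top_of_solvable ℝ L₂))
    have hc₁ : finrank ℝ L₁ = finrank ℝ (derivedSeries ℝ L₁ 1).toSubmodule + 1 := by omega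
    have hc₂ : finrank ℝ L₂ = finrank ℝ (derivedSeries ℝ L₂ 1).toSubmodule + 1 := by omega
    -- apply key lemma
    have hp0 : (e x).1 = 0 := key_lemma L₁ hc₁ hab₁ _ hp hpcent
    have hq0 : (e x).2 = 0 := key_lemma L₂ hc₂ hab₂ _ hq hqcent
    have hex0 : e x = 0 := Prod.ext hp0 hq0
    have hx0 : x = 0 := e.injective (by simpa using hex0)
    exact Subtype.ext hx0
  · intro hbij
    have hHdim' : finrank ℝ H.toSubmodule = n := hHdim
    have hdim' : finrank ℝ (⊤ : Submodule ℝ L) = n + 2 := by rw [finrank_top]; exact hdim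
    have hfle : ∀ a b : Submodule ℝ L, finrank ℝ (a ⊔ b : Submodule ℝ L) ≤
        finrank ℝ a + finrank ℝ b := by
      intro a b
      have := Submodule.finrank_sup_add_finrank_inf_eq a b
      omega
    have hspanle : ∀ v : L, finrank ℝ (Submodule.span ℝ {v}) ≤ 1 := by
      intro v
      rcases eq_or_ne v 0 with rfl | hv
      · rw [Submodule.span_zero_singleton, finrank_bot]; omega
      · rw [finrank_span_singleton hv]
    -- z ≠ 0 and y ≠ 0
    have hz0 : z ≠ 0 := by
      rintro rfl
      rw [Submodule.span_zero_singleton, bot_sup_eq] at hsup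
      have h1 := hfle (Submodule.span ℝ {y}) H.toSubmodule
      rw [hsup, hdim', hHdim'] at h1
      have := hspanle y
      omega
    have hy0 : y ≠ 0 := by
      rintro rfl
      rw [Submodule.span_zero_singleton, sup_bot_eq] at hsup
      have h1 := hfle (Submodule.span ℝ {z}) H.toSubmodule
      rw [hsup, hdim', hHdim'] at h1
      have := hspanle z
      omega
    -- the correcting element x₀
    have hw : ⁅z, y⁆ ∈ H := by
      rw [hH]
      exact LieSubmodule.lie_mem_lie (LieSubmodule.mem_top z) (LieSubmodule.mem_top y)
    obtain ⟨x₀s, hx₀⟩ := hbij.2 ⟨-⁅z, y⁆, neg_mem hw⟩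
    have hx₀H : (x₀s : L) ∈ H := x₀s.2
    have hzx₀ : ⁅z, (x₀s : L)⁆ = -⁅z, y⁆ := congrArg Subtype.val hx₀
    set y' : L := y + (x₀s : L) with hy'def
    -- y' is central
    have hy'c : ∀ a : L, ⁅y', a⁆ = 0 := by
      intro a
      obtain ⟨c, b, h, hh, rfl⟩ := hdecomp a
      have e1 : ⁅y', z⁆ = 0 := by
        rw [hy'def, add_lie, ← lie_skew y z, ← lie_skew (x₀s : L) z, hzx₀]
        simp
        rw [← lie_skew y z]
        abel
      have e2 : ⁅y', y⁆ = 0 := by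
        rw [hy'def, add_lie, lie_self, ← lie_skew (x₀s : L) y, hy _ hx₀H]
        simp
      have e3 : ⁅y', h⁆ = 0 := by
        rw [hy'def, add_lie, hy h hh, habL _ hx₀H h hh]
        simp
      rw [lie_add, lie_add, lie_smul, lie_smul, e1, e2, e3]
      simp
    -- y' ≠ 0
    have hy'0 : y' ≠ 0 := by
      intro hcon
      have h1 : y = -(x₀s : L) := eq_neg_of_add_eq_zero_left hcon
      have h2 : y ∈ Submodule.span ℝ {y} ⊓ H.toSubmodule :=
        ⟨Submodule.mem_span_singleton_self y, h1 ▸ neg_mem hx₀H⟩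
      rw [hyind] at h2
      exact hy0 h2
    -- the subalgebra K
    have hKlie : ∀ {x1 y1 : L}, x1 ∈ Submodule.span ℝ {z} ⊔ H.toSubmodule →
        y1 ∈ Submodule.span ℝ {z} ⊔ H.toSubmodule →
        ⁅x1, y1⁆ ∈ Submodule.span ℝ {z} ⊔ H.toSubmodule := by
      intro x1 y1 hx1 hy1
      obtain ⟨s1, hs1, h1, hh1, rfl⟩ := Submodule.mem_sup.mp hx1
      obtain ⟨s2, hs2, h2, hh2, rfl⟩ := Submodule.mem_sup.mp hy1
      obtain ⟨c, rfl⟩ := Submodule.mem_span_singleton.mp hs1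
      obtain ⟨c', rfl⟩ := Submodule.mem_span_singleton.mp hs2
      apply Submodule.mem_sup_right
      have expand : ⁅c • z + h1, c' • z + h2⁆ =
          c • ⁅z, h2⁆ + c' • ⁅h1, z⁆ + ⁅h1, h2⁆ := by
        simp only [add_lie, lie_add, lie_smul, smul_lie, lie_self, smul_zero, zero_add,
          add_zero, smul_add, smul_smul]
        abel
      rw [expand]
      have m1 : ⁅z, h2⁆ ∈ H.toSubmodule := H.lie_mem hh2
      have m2 : ⁅h1, z⁆ ∈ H.toSubmodule := by
        rw [← lie_skew h1 z]
        exact neg_mem (H.lie_mem hh1)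
      have m3 : ⁅h1, h2⁆ ∈ H.toSubmodule := by rw [habL h1 hh1 h2 hh2]; exact zero_mem _
      exact add_mem (add_mem (Submodule.smul_mem _ c m1) (Submodule.smul_mem _ c' m2)) m3
    set K : LieSubalgebra ℝ L :=
      { toSubmodule := Submodule.span ℝ {z} ⊔ H.toSubmodule
        lie_mem' := fun hx1 hy1 => hKlie hx1 hy1 } with hKdef
    have hzK : z ∈ K := Submodule.mem_sup_left (Submodule.mem_span_singleton_self z)
    haveI ntK : Nontrivial ↥K :=
      ⟨⟨⟨z, hzK⟩, 0, fun hcon => hz0 (congrArg Subtype.val hcon)⟩⟩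
    haveI : FiniteDimensional ℝ ↥K :=
      inferInstanceAs (FiniteDimensional ℝ (Submodule.span ℝ {z} ⊔ H.toSubmodule : Submodule ℝ L))
    -- the linear map Φ
    set Φ : (ℝ × ↥K) →ₗ[ℝ] L :=
      (LinearMap.toSpanSingleton ℝ L y').comp (LinearMap.fst ℝ ℝ ↥K) +
        K.incl.toLinearMap.comp (LinearMap.snd ℝ ℝ ↥K) with hΦdef
    have hΦapply : ∀ p : ℝ × ↥K, Φ p = p.1 • y' + (p.2 : L) := by
      intro p
      simp [hΦdef, LinearMap.toSpanSingleton_apply]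
    -- Φ is a Lie algebra hom
    letI : LieRing ℝ := LieRing.ofAssociativeRing
    letI : LieAlgebra ℝ ℝ := LieAlgebra.ofAssociativeAlgebra
    have hmaplie : ∀ a b : ℝ × ↥K, Φ ⁅a, b⁆ = ⁅Φ a, Φ b⁆ := by
      intro a b
      have hR : (⁅a.1, b.1⁆ : ℝ) = 0 := by rw [Ring.lie_def]; ring
      have hbr : (⁅a, b⁆ : ℝ × ↥K) = (0, ⁅a.2, b.2⁆) := by
        show (⁅a.1, b.1⁆, ⁅a.2, b.2⁆) = _
        rw [hR]
      rw [hbr, hΦapply, hΦapply, hΦapply]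
      have hcoe : ((⁅a.2, b.2⁆ : ↥K) : L) = ⁅(a.2 : L), (b.2 : L)⁆ := rfl
      have hky' : ∀ k : ↥K, ⁅(k : L), y'⁆ = 0 := by
        intro k
        rw [← lie_skew (k : L) y', hy'c]
        simp
      simp only [lie_add, add_lie, lie_smul, smul_lie, hy'c, hky', smul_zero, zero_add,
        add_zero, zero_smul]
      exact hcoe
    -- surjectivity
    have hsup2 : Submodule.span ℝ {y'} ⊔ (Submodule.span ℝ {z} ⊔ H.toSubmodule) = ⊤ := by
      apply top_unique
      rw [← hsup]
      apply sup_le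
      apply sup_le
      · exact le_trans le_sup_left le_sup_right
      · rw [Submodule.span_le, Set.singleton_subset_iff]
        have hyv : (y : L) = y' + (-(x₀s : L)) := by rw [hy'def]; abel
        show y ∈ Submodule.span ℝ {y'} ⊔ (Submodule.span ℝ {z} ⊔ H.toSubmodule)
        rw [hyv]
        exact add_mem (Submodule.mem_sup_left (Submodule.mem_span_singleton_self y'))
          (Submodule.mem_sup_right (Submodule.mem_sup_right (neg_mem hx₀H)))
      · exact le_trans le_sup_right le_sup_right
    have hΦsurj : Function.Surjective Φ := by
      intro a
      have ha : a ∈ (⊤ : Submodule ℝ L) := trivial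
      rw [← hsup2] at ha
      obtain ⟨s, hs, k, hk, rfl⟩ := Submodule.mem_sup.mp ha
      obtain ⟨c, rfl⟩ := Submodule.mem_span_singleton.mp hs
      exact ⟨(c, ⟨k, hk⟩), by rw [hΦapply]⟩
    -- dimension count and injectivity
    have hKdim : finrank ℝ ↥K = n + 1 := by
      have hinfzH : Submodule.span ℝ {z} ⊓ H.toSubmodule = ⊥ := by
        apply le_bot_iff.mp
        calc Submodule.span ℝ {z} ⊓ H.toSubmodule
            ≤ Submodule.span ℝ {z} ⊓ (Submodule.span ℝ {y} ⊔ H.toSubmodule) :=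
              inf_le_inf_left _ le_sup_right
          _ = ⊥ := hzind
      have h1 := Submodule.finrank_sup_add_finrank_inf_eq (Submodule.span ℝ {z}) H.toSubmodule
      rw [hinfzH, finrank_bot, finrank_span_singleton hz0, hHdim'] at h1
      show finrank ℝ (Submodule.span ℝ {z} ⊔ H.toSubmodule : Submodule ℝ L) = n + 1
      omega
    have hfr : finrank ℝ (ℝ × ↥K) = finrank ℝ L := by
      rw [Module.finrank_prod, Module.finrank_self, hKdim, hdim]
      omega
    have hΦinj : Function.Injective Φ :=
      (LinearMap.injective_iff_surjective_of_finrank_eq_finrank hfr).mpr hΦsurj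
    -- assemble
    let ψ : (ℝ × ↥K) →ₗ⁅ℝ⁆ L := { Φ with map_lie' := fun {a b} => hmaplie a b }
    have hψbij : Function.Bijective ψ := ⟨hΦinj, hΦsurj⟩
    exact ⟨ℝ, ↥K, inferInstance, inferInstance, inferInstance, inferInstance,
      inferInstance, ntK, ⟨(LieEquiv.ofBijective ψ hψbij).symm⟩⟩
end
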